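/- arXiv:2308.05689 — 9 statements merged into one kernel-verified Lean document; each statement's English description precedes it below -/
import Mathlib

section
/- Let R be a stability function of order p ∈ ℕ with s stages. Then R is strongly stable if and only if the following two conditions both hold: (a) for every n ∈ ℕ and every semi-dissipative, asymptotically stable matrix L ∈ ℂ^{n×n} there exists τ₀ > 0 such that ‖R(τL)‖₂ ≤ 1 for all τ ∈ (0, τ₀]; and (b) for every y ∈ ℝ there exists τ₀ > 0 such that |R(iτy)| ≤ 1 for all τ ∈ (0, τ₀]. -/
open Matrix Polynomial
open scoped Matrix.Norms.L2Operator ComplexOrder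

noncomputable section

/-- Hermitian part `L_H = (L + L*)/2` of a matrix. -/
def hermPart {n : ℕ} (L : Matrix (Fin n) (Fin n) ℂ) : Matrix (Fin n) (Fin n) ℂ :=
  (1/2 : ℂ) • (L + Lᴴ)

/-- Skew-Hermitian part `L_S = (L - L*)/2` of a matrix. -/
def skewPart {n : ℕ} (L : Matrix (Fin n) (Fin n) ℂ) : Matrix (Fin n) (Fin n) ℂ :=
  (1/2 : ℂ) • (L - Lᴴ)

/-- A matrix is semi-dissipative if its Hermitian part is negative semidefinite. -/
def IsSemiDissipative {n : ℕ} (L : Matrix (Fin n) (Fin n) ℂ) : Prop :=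
  (-(hermPart L)).PosSemidef

/-- A matrix is asymptotically stable if all of its eigenvalues have negative real part. -/
def IsAsympStable {n : ℕ} (L : Matrix (Fin n) (Fin n) ℂ) : Prop :=
  ∀ μ ∈ spectrum ℂ L, μ.re < 0

/-- Evaluation of the stability function `R(z) = ∑_{j=0}^s c_j z^j / j!` at a matrix. -/
def stabFunMat (c : ℕ → ℝ) (s : ℕ) {n : ℕ} (M : Matrix (Fin n) (Fin n) ℂ) :
    Matrix (Fin n) (Fin n) ℂ :=
  ∑ j ∈ Finset.range (s + 1), ((c j : ℂ) / (j.factorial : ℂ)) • M ^ j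

/-- Evaluation of the stability function `R(z) = ∑_{j=0}^s c_j z^j / j!` at a complex scalar. -/
def stabFun (c : ℕ → ℝ) (s : ℕ) (z : ℂ) : ℂ :=
  ∑ j ∈ Finset.range (s + 1), (c j : ℂ) * z ^ j / (j.factorial : ℂ)

/-- `c` is the coefficient sequence of a stability function of order `p` with `s` stages:
`c j = 1` for `j ≤ p`, `c (p+1) ≠ 1`, and `c j = 0` for `j > s`. -/
structure IsStabilityFunction (c : ℕ → ℝ) (p s : ℕ) : Prop where
  pos : 0 < p
  ple : p ≤ s
  low : ∀ j ≤ p, c j = 1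
  cp1 : c (p + 1) ≠ 1
  high : ∀ j, s < j → c j = 0

/-- The matrix `T_m = ∑_{j=0}^m L_S^j L_H (L_S^*)^j` from the definition of the
hypocoercivity index. -/
def Tmat {n : ℕ} (L : Matrix (Fin n) (Fin n) ℂ) (m : ℕ) : Matrix (Fin n) (Fin n) ℂ :=
  ∑ j ∈ Finset.range (m + 1), (skewPart L) ^ j * hermPart L * ((skewPart L)ᴴ) ^ j

/-- `m` is the hypocoercivity index of `L`: the smallest `m` with `T_m` negative definite. -/
def IsHCIndex {n : ℕ} (L : Matrix (Fin n) (Fin n) ℂ) (m : ℕ) : Prop :=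
  (-(Tmat L m)).PosDef ∧ ∀ k < m, ¬ (-(Tmat L k)).PosDef

/-- Strong stability of a stability function: monotonicity of the `P`-norm of the numerical
solution, for every Lyapunov stable `L` and every admissible `P`. -/
def StronglyStable (c : ℕ → ℝ) (s : ℕ) : Prop :=
  ∀ (n : ℕ) (L P : Matrix (Fin n) (Fin n) ℂ), P.PosDef →
    (-(Lᴴ * P + P * L)).PosSemidef →
    ∃ τ₀ > (0:ℝ), ∀ τ : ℝ, 0 < τ → τ ≤ τ₀ → ∀ u : Fin n → ℂ,
      (star (stabFunMat c s ((τ:ℂ) • L) *ᵥ u) ⬝ᵥ (P *ᵥ (stabFunMat c s ((τ:ℂ) • L) *ᵥ u))).re ≤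
        (star u ⬝ᵥ (P *ᵥ u)).re


-- ### helper lemmas ###

def nrm {k : ℕ} (v : Fin k → ℂ) : ℝ := ‖(EuclideanSpace.equiv (Fin k) ℂ).symm v‖

lemma nrm_nonneg {k : ℕ} (v : Fin k → ℂ) : 0 ≤ nrm v := norm_nonneg _

lemma nrm_sq {k : ℕ} (v : Fin k → ℂ) : nrm v ^ 2 = ∑ i, ‖v i‖ ^ 2 := by
  rw [nrm, EuclideanSpace.norm_eq, Real.sq_sqrt (by positivity)]
  rfl

lemma nrm_mulVec_le {k : ℕ} (A : Matrix (Fin k) (Fin k) ℂ) (v : Fin k → ℂ) :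
    nrm (A *ᵥ v) ≤ ‖A‖ * nrm v :=
  A.l2_opNorm_mulVec ((EuclideanSpace.equiv (Fin k) ℂ).symm v)

lemma opNorm_le_of {k : ℕ} (A : Matrix (Fin k) (Fin k) ℂ) {C : ℝ} (hC : 0 ≤ C)
    (h : ∀ v : Fin k → ℂ, nrm (A *ᵥ v) ≤ C * nrm v) : ‖A‖ ≤ C := by
  rw [Matrix.l2_opNorm_def]
  exact ContinuousLinearMap.opNorm_le_bound _ hC fun x => h x

lemma re_dot {k : ℕ} (v : Fin k → ℂ) : (star v ⬝ᵥ v).re = nrm v ^ 2 := by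
  rw [nrm_sq, dotProduct, Complex.re_sum]
  congr 1; ext i
  rw [Pi.star_apply, RCLike.star_def, Complex.conj_mul']
  rw [← Complex.ofReal_pow, Complex.ofReal_re]

lemma nrm_mulVec_unitary {k : ℕ} {U : Matrix (Fin k) (Fin k) ℂ} (hU : Uᴴ * U = 1)
    (v : Fin k → ℂ) : nrm (U *ᵥ v) = nrm v := by
  have h1 : (star (U *ᵥ v)) ⬝ᵥ (U *ᵥ v) = star v ⬝ᵥ v := by
    rw [star_mulVec, dotProduct_mulVec, vecMul_vecMul, hU, vecMul_one]
  have := congrArg Complex.re h1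
  rw [re_dot, re_dot] at this
  nlinarith [nrm_nonneg (U *ᵥ v), nrm_nonneg v]

lemma opNorm_unitary_conj_le {k : ℕ} {U : Matrix (Fin k) (Fin k) ℂ} (hU : Uᴴ * U = 1)
    (hU2 : U * Uᴴ = 1) (A : Matrix (Fin k) (Fin k) ℂ) : ‖Uᴴ * A * U‖ ≤ ‖A‖ := by
  apply opNorm_le_of _ (norm_nonneg A)
  intro v
  have : (Uᴴ * A * U) *ᵥ v = Uᴴ *ᵥ (A *ᵥ (U *ᵥ v)) := by
    rw [← mulVec_mulVec, ← mulVec_mulVec]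
  rw [this, nrm_mulVec_unitary (by rw [conjTranspose_conjTranspose]; exact hU2),
    ← nrm_mulVec_unitary hU v]
  exact nrm_mulVec_le A (U *ᵥ v)

lemma opNorm_unitary_conj {k : ℕ} {U : Matrix (Fin k) (Fin k) ℂ} (hU : Uᴴ * U = 1)
    (hU2 : U * Uᴴ = 1) (A : Matrix (Fin k) (Fin k) ℂ) : ‖Uᴴ * A * U‖ = ‖A‖ := by
  refine le_antisymm (opNorm_unitary_conj_le hU hU2 A) ?_
  have h := opNorm_unitary_conj_le (U := Uᴴ) (by rw [conjTranspose_conjTranspose]; exact hU2)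
    (by rw [conjTranspose_conjTranspose]; exact hU) (Uᴴ * A * U)
  rw [conjTranspose_conjTranspose] at h
  calc ‖A‖ = ‖U * (Uᴴ * A * U) * Uᴴ‖ := by
        rw [show U * (Uᴴ * A * U) * Uᴴ = (U * Uᴴ) * A * (U * Uᴴ) by noncomm_ring, hU2, one_mul, mul_one]
    _ ≤ ‖Uᴴ * A * U‖ := h

lemma cpow {k : ℕ} (Q Qi M : Matrix (Fin k) (Fin k) ℂ) (h : Q * Qi = 1) (h2 : Qi * Q = 1)
    (j : ℕ) : (Q * M * Qi) ^ j = Q * M ^ j * Qi := by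
  induction j with
  | zero => simp [h]
  | succ j ih =>
      rw [pow_succ, ih, pow_succ]
      calc Q * M ^ j * Qi * (Q * M * Qi) = Q * M ^ j * (Qi * Q) * M * Qi := by noncomm_ring
        _ = Q * (M ^ j * M) * Qi := by rw [h2]; noncomm_ring

lemma stabFunMat_conj (c : ℕ → ℝ) (s : ℕ) {k : ℕ} (Q Qi M : Matrix (Fin k) (Fin k) ℂ)
    (h : Q * Qi = 1) (h2 : Qi * Q = 1) :
    stabFunMat c s (Q * M * Qi) = Q * stabFunMat c s M * Qi := by
  rw [stabFunMat, stabFunMat, Finset.mul_sum, Finset.sum_mul]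
  refine Finset.sum_congr rfl fun j _ => ?_
  rw [cpow Q Qi M h h2, Matrix.mul_smul, Matrix.smul_mul]

lemma smul_comm_conj {k : ℕ} (τ : ℂ) (Q Qi M : Matrix (Fin k) (Fin k) ℂ) :
    Q * (τ • M) * Qi = τ • (Q * M * Qi) := by
  rw [Matrix.mul_smul, Matrix.smul_mul]

/-- powers preserve the "decoupled at index 0" structure -/
lemma pow_decoupled {k : ℕ} (M : Matrix (Fin (k+1)) (Fin (k+1)) ℂ)
    (h1 : ∀ i : Fin k, M i.succ 0 = 0) (h2 : ∀ i : Fin k, M 0 i.succ = 0) (j : ℕ) :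
    (M ^ j) 0 0 = (M 0 0) ^ j ∧ (∀ i : Fin k, (M ^ j) i.succ 0 = 0) ∧
      (∀ i : Fin k, (M ^ j) 0 i.succ = 0) ∧
      (M ^ j).submatrix Fin.succ Fin.succ = (M.submatrix Fin.succ Fin.succ) ^ j := by
  induction j with
  | zero =>
      refine ⟨by simp [Matrix.one_apply], fun i => ?_, fun i => ?_, ?_⟩
      · simp [Matrix.one_apply, Fin.succ_ne_zero i]
      · simp [Matrix.one_apply, (Fin.succ_ne_zero i).symm]
      · ext i j; simp [Matrix.one_apply, Fin.succ_inj]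
  | succ j ih =>
      obtain ⟨ih1, ih2, ih3, ih4⟩ := ih
      refine ⟨?_, fun i => ?_, fun i => ?_, ?_⟩
      · rw [pow_succ, Matrix.mul_apply, Fin.sum_univ_succ, ih1, pow_succ]
        simp [fun i => ih3 i, fun i => h1 i]
      · rw [pow_succ, Matrix.mul_apply, Fin.sum_univ_succ, ih2 i]
        simp [fun i => h1 i]
      · rw [pow_succ, Matrix.mul_apply, Fin.sum_univ_succ, ih1]
        simp [fun i => ih3 i, fun i => h2 i]
      · ext a b
        rw [Matrix.submatrix_apply, pow_succ, pow_succ, Matrix.mul_apply, Matrix.mul_apply,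
          Fin.sum_univ_succ, ih2 a, zero_mul, zero_add]
        refine Finset.sum_congr rfl fun l _ => ?_
        rw [← ih4]; rfl

lemma stabFunMat_decoupled (c : ℕ → ℝ) (s : ℕ) {k : ℕ} (M : Matrix (Fin (k+1)) (Fin (k+1)) ℂ)
    (h1 : ∀ i : Fin k, M i.succ 0 = 0) (h2 : ∀ i : Fin k, M 0 i.succ = 0) :
    stabFunMat c s M 0 0 = stabFun c s (M 0 0) ∧
      (∀ i : Fin k, stabFunMat c s M i.succ 0 = 0) ∧
      (∀ i : Fin k, stabFunMat c s M 0 i.succ = 0) ∧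
      (stabFunMat c s M).submatrix Fin.succ Fin.succ
        = stabFunMat c s (M.submatrix Fin.succ Fin.succ) := by
  refine ⟨?_, fun i => ?_, fun i => ?_, ?_⟩
  · rw [stabFunMat, stabFun, Matrix.sum_apply]
    refine Finset.sum_congr rfl fun j _ => ?_
    rw [Matrix.smul_apply, (pow_decoupled M h1 h2 j).1, smul_eq_mul]
    ring
  · rw [stabFunMat, Matrix.sum_apply]
    refine Finset.sum_eq_zero fun j _ => ?_
    rw [Matrix.smul_apply, (pow_decoupled M h1 h2 j).2.1 i, smul_zero]
  · rw [stabFunMat, Matrix.sum_apply]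
    refine Finset.sum_eq_zero fun j _ => ?_
    rw [Matrix.smul_apply, (pow_decoupled M h1 h2 j).2.2.1 i, smul_zero]
  · ext a b
    rw [Matrix.submatrix_apply, stabFunMat, stabFunMat, Matrix.sum_apply, Matrix.sum_apply]
    refine Finset.sum_congr rfl fun j _ => ?_
    rw [Matrix.smul_apply, Matrix.smul_apply, ← (pow_decoupled M h1 h2 j).2.2.2]
    rfl

lemma dot_self_real {k : ℕ} (v : Fin k → ℂ) : star v ⬝ᵥ v = ((nrm v ^ 2 : ℝ) : ℂ) := by
  rw [dotProduct, nrm_sq, Complex.ofReal_sum]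
  refine Finset.sum_congr rfl fun i _ => ?_
  rw [Pi.star_apply, RCLike.star_def, Complex.conj_mul', Complex.ofReal_pow]

lemma star_dot_flip {k : ℕ} (v w : Fin k → ℂ) :
    star w ⬝ᵥ v = (starRingEnd ℂ) (star v ⬝ᵥ w) := by
  rw [dotProduct, dotProduct, map_sum]
  refine Finset.sum_congr rfl fun i _ => ?_
  simp [mul_comm]

lemma dot_conjTranspose_mulVec {k : ℕ} (L : Matrix (Fin k) (Fin k) ℂ) (v : Fin k → ℂ) :
    star v ⬝ᵥ (Lᴴ *ᵥ v) = (starRingEnd ℂ) (star v ⬝ᵥ (L *ᵥ v)) := by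
  rw [dotProduct_mulVec, ← star_mulVec, star_dot_flip]

lemma dot_hermPart {k : ℕ} (L : Matrix (Fin k) (Fin k) ℂ) (v : Fin k → ℂ) :
    star v ⬝ᵥ (hermPart L *ᵥ v) = (((star v ⬝ᵥ (L *ᵥ v)).re : ℝ) : ℂ) := by
  rw [hermPart, smul_mulVec, dotProduct_smul, add_mulVec, dotProduct_add,
    dot_conjTranspose_mulVec, Complex.add_conj]
  rw [smul_eq_mul]
  push_cast
  ring

lemma semidiss_re_le {k : ℕ} {L : Matrix (Fin k) (Fin k) ℂ} (hL : IsSemiDissipative L)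
    (v : Fin k → ℂ) : (star v ⬝ᵥ (L *ᵥ v)).re ≤ 0 := by
  have h := hL.dotProduct_mulVec_nonneg v
  rw [neg_mulVec, dotProduct_neg, dot_hermPart] at h
  rw [← neg_nonneg]
  have := Complex.le_def.mp h
  simpa using this.1

lemma nrm_pos {k : ℕ} {v : Fin k → ℂ} (hv : v ≠ 0) : 0 < nrm v := by
  have h0 : nrm v ≠ 0 := by
    rw [nrm, norm_ne_zero_iff]
    simpa using hv
  exact lt_of_le_of_ne (nrm_nonneg v) (Ne.symm h0)

lemma eigen_re_le {k : ℕ} {L : Matrix (Fin k) (Fin k) ℂ} (hL : IsSemiDissipative L)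
    {v : Fin k → ℂ} (hv : v ≠ 0) {μ : ℂ} (he : L *ᵥ v = μ • v) : μ.re ≤ 0 := by
  have h := semidiss_re_le hL v
  rw [he, dotProduct_smul, dot_self_real, smul_eq_mul] at h
  have h2 : (μ * ((nrm v ^ 2 : ℝ) : ℂ)).re = μ.re * nrm v ^ 2 := by
    simp [Complex.mul_re, ← Complex.ofReal_pow]
  rw [h2] at h
  nlinarith [nrm_pos hv, pow_pos (nrm_pos hv) 2]

lemma eigen_conjTranspose {k : ℕ} {L : Matrix (Fin k) (Fin k) ℂ} (hL : IsSemiDissipative L)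
    {v : Fin k → ℂ} (hv : v ≠ 0) {μ : ℂ} (he : L *ᵥ v = μ • v) (hre : μ.re = 0) :
    Lᴴ *ᵥ v = (-μ) • v := by
  have hq : star v ⬝ᵥ ((-(hermPart L)) *ᵥ v) = 0 := by
    rw [neg_mulVec, dotProduct_neg, dot_hermPart, he, dotProduct_smul, dot_self_real,
      smul_eq_mul]
    simp [Complex.ext_iff, Complex.mul_re, Complex.mul_im, ← Complex.ofReal_pow, hre]
  have h0 : (-(hermPart L)) *ᵥ v = 0 := (hL.dotProduct_mulVec_zero_iff v).mp hq
  have h1 : hermPart L *ᵥ v = 0 := by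
    rw [neg_mulVec, neg_eq_zero] at h0; exact h0
  have h2 : (L + Lᴴ) *ᵥ v = 0 := by
    rw [hermPart, smul_mulVec] at h1
    have := smul_eq_zero.mp h1
    rcases this with h | h
    · norm_num at h
    · exact h
  rw [add_mulVec, he] at h2
  have : Lᴴ *ᵥ v = -(μ • v) := by linear_combination (norm := module) h2
  rw [this, neg_smul]

lemma psd_smul_real {k : ℕ} {A : Matrix (Fin k) (Fin k) ℂ} (hA : A.PosSemidef) {r : ℝ}
    (hr : 0 ≤ r) : ((r : ℂ) • A).PosSemidef := by
  refine Matrix.PosSemidef.of_dotProduct_mulVec_nonneg ?_ ?_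
  · rw [Matrix.IsHermitian, conjTranspose_smul, hA.1.eq, Complex.star_def,
      Complex.conj_ofReal]
  · intro x
    rw [smul_mulVec, dotProduct_smul, smul_eq_mul]
    exact mul_nonneg (by rw [Complex.zero_le_real]; exact hr) (hA.dotProduct_mulVec_nonneg x)

lemma psd_submatrix_succ {k : ℕ} {A : Matrix (Fin (k+1)) (Fin (k+1)) ℂ} (hA : A.PosSemidef) :
    (A.submatrix Fin.succ Fin.succ).PosSemidef := by
  refine Matrix.PosSemidef.of_dotProduct_mulVec_nonneg ?_ ?_
  · exact hA.1.submatrix Fin.succ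
  · intro x
    have h := hA.dotProduct_mulVec_nonneg (Fin.cons 0 x)
    have e : star (Fin.cons 0 x : Fin (k+1) → ℂ) ⬝ᵥ (A *ᵥ Fin.cons 0 x)
        = star x ⬝ᵥ (A.submatrix Fin.succ Fin.succ *ᵥ x) := by
      simp [dotProduct, Matrix.mulVec, Fin.sum_univ_succ]
    rwa [e] at h

lemma semidiss_submatrix {k : ℕ} {M : Matrix (Fin (k+1)) (Fin (k+1)) ℂ}
    (h : IsSemiDissipative M) : IsSemiDissipative (M.submatrix Fin.succ Fin.succ) := by
  have key : -(hermPart (M.submatrix Fin.succ Fin.succ))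
      = (-(hermPart M)).submatrix Fin.succ Fin.succ := by
    rw [hermPart, hermPart, submatrix_neg]
    ext i j
    simp [conjTranspose_apply]
  rw [IsSemiDissipative, key]
  exact psd_submatrix_succ h

lemma exists_eigenvector {k : ℕ} (L : Matrix (Fin k) (Fin k) ℂ) {μ : ℂ}
    (hμ : μ ∈ spectrum ℂ L) : ∃ v : Fin k → ℂ, v ≠ 0 ∧ L *ᵥ v = μ • v := by
  rw [← AlgEquiv.spectrum_eq (Matrix.toLinAlgEquiv (Pi.basisFun ℂ (Fin k))) L] at hμ
  have he : Module.End.HasEigenvalue (Matrix.toLinAlgEquiv (Pi.basisFun ℂ (Fin k)) L) μ :=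
    Module.End.hasEigenvalue_iff_mem_spectrum.mpr hμ
  obtain ⟨v, hv⟩ := he.exists_hasEigenvector
  refine ⟨v, hv.2, ?_⟩
  have h2 := hv.apply_eq_smul
  rw [Matrix.toLinAlgEquiv_apply] at h2
  have hr : ⇑((Pi.basisFun ℂ (Fin k)).repr v) = v := funext fun i => by simp
  have hs : ∀ (w : Fin k → ℂ), ∑ x : Fin k, w x • (Pi.basisFun ℂ (Fin k)) x = w := by
    intro w; funext j
    rw [Finset.sum_apply]
    simp [Pi.basisFun_apply, Pi.single_apply]
  rw [hr, hs] at h2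
  exact h2

lemma unitary_conj_col0 {k : ℕ} (W A : Matrix (Fin (k+1)) (Fin (k+1)) ℂ)
    (hW : Wᴴ * W = 1) {v : Fin (k+1) → ℂ} (hv : ∀ j, W j 0 = v j) {a : ℂ}
    (hA : A *ᵥ v = a • v) (i : Fin (k+1)) :
    (Wᴴ * A * W) i 0 = a * (1 : Matrix (Fin (k+1)) (Fin (k+1)) ℂ) i 0 := by
  have hcol : ∀ m, (A * W) m 0 = a * v m := by
    intro m
    rw [Matrix.mul_apply]
    have : ∑ j, A m j * W j 0 = (A *ᵥ v) m := by
      rw [mulVec, dotProduct]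
      exact Finset.sum_congr rfl fun j _ => by rw [hv j]
    rw [this, hA, Pi.smul_apply, smul_eq_mul]
  have : (Wᴴ * A * W) i 0 = (Wᴴ * (A * W)) i 0 := by rw [Matrix.mul_assoc]
  rw [this, Matrix.mul_apply]
  calc ∑ j, Wᴴ i j * (A * W) j 0 = ∑ j, a * (Wᴴ i j * W j 0) := by
        refine Finset.sum_congr rfl fun j _ => ?_
        rw [hcol j, conjTranspose_apply, hv j]
        ring
    _ = a * (Wᴴ * W) i 0 := by rw [Matrix.mul_apply, Finset.mul_sum]
    _ = a * (1 : Matrix (Fin (k+1)) (Fin (k+1)) ℂ) i 0 := by rw [hW]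

lemma nrm_smul {k : ℕ} (a : ℂ) (v : Fin k → ℂ) : nrm (a • v) = ‖a‖ * nrm v := by
  rw [nrm, nrm, _root_.map_smul, norm_smul]

lemma exists_unitary_col {k : ℕ} (v : Fin (k+1) → ℂ) (hv : nrm v = 1) :
    ∃ U : Matrix (Fin (k+1)) (Fin (k+1)) ℂ,
      Uᴴ * U = 1 ∧ U * Uᴴ = 1 ∧ ∀ j, U j 0 = v j := by
  set E := EuclideanSpace ℂ (Fin (k+1))
  set v' : E := (EuclideanSpace.equiv (Fin (k+1)) ℂ).symm v with hv'
  have hcard : Module.finrank ℂ E = Fintype.card (Fin (k+1)) := by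
    rw [finrank_euclideanSpace_fin, Fintype.card_fin]
  have horth : Orthonormal ℂ (({0} : Set (Fin (k+1))).restrict (fun _ => v' : Fin (k+1) → E)) := by
    constructor
    · intro i
      exact hv
    · intro i j hij
      exfalso
      exact hij (Subtype.ext (i.2.trans j.2.symm))
  obtain ⟨b, hb⟩ := horth.exists_orthonormalBasis_extension_of_card_eq hcard
  have hb0 : b 0 = v' := hb 0 rfl
  refine ⟨Matrix.of fun i j => (EuclideanSpace.equiv (Fin (k+1)) ℂ) (b j) i, ?_, ?_, ?_⟩
  · ext i j
    have hinner := (orthonormal_iff_ite (𝕜 := ℂ)).mp b.orthonormal i j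
    rw [EuclideanSpace.inner_eq_star_dotProduct] at hinner
    rw [Matrix.mul_apply, Matrix.one_apply]
    rw [← hinner, dotProduct]
    refine Finset.sum_congr rfl fun m _ => ?_
    rw [conjTranspose_apply]
    exact mul_comm _ _
  · rw [mul_eq_one_comm]
    ext i j
    have hinner := (orthonormal_iff_ite (𝕜 := ℂ)).mp b.orthonormal i j
    rw [EuclideanSpace.inner_eq_star_dotProduct] at hinner
    rw [Matrix.mul_apply, Matrix.one_apply]
    rw [← hinner, dotProduct]
    refine Finset.sum_congr rfl fun m _ => ?_
    rw [conjTranspose_apply]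
    exact mul_comm _ _
  · intro j
    show (EuclideanSpace.equiv (Fin (k+1)) ℂ) (b 0) j = v j
    rw [hb0]
    rfl

lemma nrm_fin_zero (v : Fin 0 → ℂ) : nrm v = 0 := by
  have h := nrm_sq v
  simp only [Finset.univ_eq_empty, Finset.sum_empty] at h
  have := nrm_nonneg v
  nlinarith

lemma decoupled_norm_le {k : ℕ} (N : Matrix (Fin (k+1)) (Fin (k+1)) ℂ)
    (h1 : ∀ i : Fin k, N i.succ 0 = 0) (h2 : ∀ i : Fin k, N 0 i.succ = 0)
    (h00 : ‖N 0 0‖ ≤ 1) (hB : ‖N.submatrix Fin.succ Fin.succ‖ ≤ 1) :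
    ‖N‖ ≤ 1 := by
  apply opNorm_le_of _ zero_le_one
  intro u
  rw [one_mul]
  have e0 : (N *ᵥ u) 0 = N 0 0 * u 0 := by
    simp [Matrix.mulVec, dotProduct, Fin.sum_univ_succ, fun i => h2 i]
  have es : ∀ i : Fin k, (N *ᵥ u) i.succ
      = (N.submatrix Fin.succ Fin.succ *ᵥ (u ∘ Fin.succ)) i := by
    intro i
    simp [Matrix.mulVec, dotProduct, Fin.sum_univ_succ, h1 i]
  have key : nrm (N *ᵥ u) ^ 2 ≤ nrm u ^ 2 := by
    rw [nrm_sq, nrm_sq, Fin.sum_univ_succ, Fin.sum_univ_succ, e0]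
    have hs : ∑ i : Fin k, ‖(N *ᵥ u) i.succ‖ ^ 2
        = nrm (N.submatrix Fin.succ Fin.succ *ᵥ (u ∘ Fin.succ)) ^ 2 := by
      rw [nrm_sq]
      exact Finset.sum_congr rfl fun i _ => by rw [es i]
    rw [hs]
    have hb1 : nrm (N.submatrix Fin.succ Fin.succ *ᵥ (u ∘ Fin.succ)) ≤ nrm (u ∘ Fin.succ) := by
      calc nrm (N.submatrix Fin.succ Fin.succ *ᵥ (u ∘ Fin.succ))
          ≤ ‖N.submatrix Fin.succ Fin.succ‖ * nrm (u ∘ Fin.succ) := nrm_mulVec_le _ _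
        _ ≤ 1 * nrm (u ∘ Fin.succ) := by
            exact mul_le_mul_of_nonneg_right hB (nrm_nonneg _)
        _ = nrm (u ∘ Fin.succ) := one_mul _
    have hsq : nrm (N.submatrix Fin.succ Fin.succ *ᵥ (u ∘ Fin.succ)) ^ 2
        ≤ nrm (u ∘ Fin.succ) ^ 2 := by
      nlinarith [nrm_nonneg (N.submatrix Fin.succ Fin.succ *ᵥ (u ∘ Fin.succ)),
        nrm_nonneg (u ∘ Fin.succ)]
    have h0 : ‖N 0 0 * u 0‖ ^ 2 ≤ ‖u 0‖ ^ 2 := by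
      rw [norm_mul, mul_pow]
      have hle : ‖N 0 0‖ ≤ 1 := by exact h00
      have ha2 : ‖N 0 0‖ ^ 2 ≤ 1 := by nlinarith [norm_nonneg (N 0 0)]
      calc ‖N 0 0‖ ^ 2 * ‖u 0‖ ^ 2 ≤ 1 * ‖u 0‖ ^ 2 :=
            mul_le_mul_of_nonneg_right ha2 (sq_nonneg _)
        _ = ‖u 0‖ ^ 2 := one_mul _
    have hrest : nrm (u ∘ Fin.succ) ^ 2 = ∑ i : Fin k, ‖u i.succ‖ ^ 2 := by
      rw [nrm_sq]; rfl
    rw [hrest] at hsq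
    linarith
  nlinarith [nrm_nonneg (N *ᵥ u), nrm_nonneg u]

lemma key_lemma (c : ℕ → ℝ) (s : ℕ)
    (ha : ∀ (n : ℕ) (L : Matrix (Fin n) (Fin n) ℂ), IsSemiDissipative L → IsAsympStable L →
        ∃ τ₀ > (0:ℝ), ∀ τ : ℝ, 0 < τ → τ ≤ τ₀ → ‖stabFunMat c s ((τ:ℂ) • L)‖ ≤ 1)
    (hb : ∀ y : ℝ, ∃ τ₀ > (0:ℝ), ∀ τ : ℝ, 0 < τ → τ ≤ τ₀ →
        ‖stabFun c s (Complex.I * (τ:ℂ) * (y:ℂ))‖ ≤ 1) :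
    ∀ (k : ℕ) (L : Matrix (Fin k) (Fin k) ℂ), IsSemiDissipative L →
      ∃ τ₀ > (0:ℝ), ∀ τ : ℝ, 0 < τ → τ ≤ τ₀ → ‖stabFunMat c s ((τ:ℂ) • L)‖ ≤ 1 := by
  intro k
  induction k with
  | zero =>
      intro L _
      refine ⟨1, one_pos, fun τ _ _ => ?_⟩
      apply opNorm_le_of _ zero_le_one
      intro v
      rw [nrm_fin_zero, nrm_fin_zero]
      norm_num
  | succ k IH =>
      intro L hL
      by_cases hst : IsAsympStable L
      · exact ha (k+1) L hL hst
      · -- split off a purely imaginary eigenvalue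
        rw [IsAsympStable] at hst
        push_neg at hst
        obtain ⟨μ, hμspec, hμre'⟩ := hst
        obtain ⟨v0, hv00, hev0⟩ := exists_eigenvector L hμspec
        have hre : μ.re = 0 := le_antisymm (eigen_re_le hL hv00 hev0) hμre'
        -- normalized eigenvector
        set w : Fin (k+1) → ℂ := ((nrm v0 : ℂ))⁻¹ • v0 with hw
        have hnv0 : (0:ℝ) < nrm v0 := nrm_pos hv00
        have hw1 : nrm w = 1 := by
          rw [hw, nrm_smul, norm_inv, Complex.norm_real, Real.norm_eq_abs, abs_of_pos hnv0]
          field_simp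
        have hew : L *ᵥ w = μ • w := by
          rw [hw, mulVec_smul, hev0, smul_comm]
        have hw0 : w ≠ 0 := by
          intro h0
          rw [h0] at hw1
          have : nrm (0 : Fin (k+1) → ℂ) = 0 := by
            rw [nrm]
            simp
          rw [this] at hw1
          norm_num at hw1
        have hewH : Lᴴ *ᵥ w = (-μ) • w := eigen_conjTranspose hL hw0 hew hre
        obtain ⟨U, hU1, hU2, hUcol⟩ := exists_unitary_col w hw1
        set M : Matrix (Fin (k+1)) (Fin (k+1)) ℂ := Uᴴ * L * U with hM
        have hMH : Mᴴ = Uᴴ * Lᴴ * U := by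
          rw [hM, conjTranspose_mul, conjTranspose_mul, conjTranspose_conjTranspose,
            Matrix.mul_assoc]
        have hMcol := fun i => unitary_conj_col0 U L hU1 hUcol hew i
        have hMHcol := fun i => unitary_conj_col0 U Lᴴ hU1 hUcol hewH i
        have hM00 : M 0 0 = μ := by
          rw [hM]
          rw [hMcol 0, Matrix.one_apply_eq, mul_one]
        have hM1 : ∀ i : Fin k, M i.succ 0 = 0 := by
          intro i
          rw [hM, hMcol i.succ, Matrix.one_apply_ne (Fin.succ_ne_zero i), mul_zero]
        have hM2 : ∀ i : Fin k, M 0 i.succ = 0 := by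
          intro i
          have : Mᴴ i.succ 0 = 0 := by
            rw [hMH, hMHcol i.succ, Matrix.one_apply_ne (Fin.succ_ne_zero i), mul_zero]
          rw [conjTranspose_apply] at this
          exact star_eq_zero.mp this
        -- M is semi-dissipative
        have hherm : hermPart M = Uᴴ * hermPart L * U := by
          rw [hermPart, hermPart, Matrix.mul_smul, Matrix.smul_mul]
          congr 1
          rw [hMH, hM]
          noncomm_ring
        have hMsd : IsSemiDissipative M := by
          rw [IsSemiDissipative, hherm]
          have : -(Uᴴ * hermPart L * U) = Uᴴ * (-(hermPart L)) * U := by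
            noncomm_ring
          rw [this]
          exact hL.conjTranspose_mul_mul_same U
        set L' : Matrix (Fin k) (Fin k) ℂ := M.submatrix Fin.succ Fin.succ with hL'def
        have hL'sd : IsSemiDissipative L' := semidiss_submatrix hMsd
        obtain ⟨τ₁, hτ₁, hIH⟩ := IH L' hL'sd
        obtain ⟨τ₂, hτ₂, hsc⟩ := hb μ.im
        refine ⟨min τ₁ τ₂, lt_min hτ₁ hτ₂, fun τ hτ hτle => ?_⟩
        -- transfer the norm through the unitary conjugation
        have hnorm : ‖stabFunMat c s ((τ:ℂ) • L)‖ = ‖stabFunMat c s ((τ:ℂ) • M)‖ := by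
          rw [← opNorm_unitary_conj hU1 hU2 (stabFunMat c s ((τ:ℂ) • L)),
            ← stabFunMat_conj c s Uᴴ U ((τ:ℂ) • L) hU1 hU2, smul_comm_conj, ← hM]
        rw [hnorm]
        -- structure of stabFunMat at the decoupled matrix τ • M
        have hs1 : ∀ i : Fin k, ((τ:ℂ) • M) i.succ 0 = 0 := by
          intro i
          rw [Matrix.smul_apply, hM1 i, smul_zero]
        have hs2 : ∀ i : Fin k, ((τ:ℂ) • M) 0 i.succ = 0 := by
          intro i
          rw [Matrix.smul_apply, hM2 i, smul_zero]
        obtain ⟨hd00, hd1, hd2, hdsub⟩ := stabFunMat_decoupled c s ((τ:ℂ) • M) hs1 hs2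
        apply decoupled_norm_le _ hd1 hd2
        · rw [hd00]
          have hμeq : ((τ:ℂ) • M) 0 0 = Complex.I * (τ:ℂ) * (μ.im:ℂ) := by
            rw [Matrix.smul_apply, hM00]
            apply Complex.ext <;> simp [hre, Complex.mul_re, Complex.mul_im]
          rw [hμeq]
          exact hsc τ hτ (le_trans hτle (min_le_right _ _))
        · rw [hdsub]
          have hsub : ((τ:ℂ) • M).submatrix Fin.succ Fin.succ = (τ:ℂ) • L' := by
            ext i j
            rw [Matrix.submatrix_apply, Matrix.smul_apply, Matrix.smul_apply, hL'def,
              Matrix.submatrix_apply]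
          rw [hsub]
          exact hIH τ hτ (le_trans hτle (min_le_left _ _))

lemma posDef_one {k : ℕ} : (1 : Matrix (Fin k) (Fin k) ℂ).PosDef := by
  refine Matrix.PosDef.of_dotProduct_mulVec_pos Matrix.isHermitian_one fun x hx => ?_
  rw [Matrix.one_mulVec, dot_self_real]
  have : (0:ℝ) < nrm x ^ 2 := pow_pos (nrm_pos hx) 2
  exact_mod_cast this

lemma psd_zero {k : ℕ} : (0 : Matrix (Fin k) (Fin k) ℂ).PosSemidef := by
  refine Matrix.PosSemidef.of_dotProduct_mulVec_nonneg (by simp [Matrix.IsHermitian]) fun x => by simp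

lemma quad_re {k : ℕ} {Q P : Matrix (Fin k) (Fin k) ℂ} (hQH : Qᴴ = Q) (hQQ : Q * Q = P)
    (w : Fin k → ℂ) : (star w ⬝ᵥ (P *ᵥ w)).re = nrm (Q *ᵥ w) ^ 2 := by
  rw [← hQQ, ← Matrix.mulVec_mulVec, dotProduct_mulVec,
    show star w ᵥ* Q = star (Q *ᵥ w) from by rw [star_mulVec, hQH], re_dot]

lemma scalar_stabFunMat (c : ℕ → ℝ) (s : ℕ) (z : ℂ) :
    stabFunMat c s (z • (1 : Matrix (Fin 1) (Fin 1) ℂ)) = stabFun c s z • 1 := by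
  rw [stabFunMat, stabFun, Finset.sum_smul]
  refine Finset.sum_congr rfl fun j _ => ?_
  rw [_root_.smul_pow, one_pow, smul_smul]
  congr 1
  ring

lemma quad_mono {n : ℕ} (Q Qi Mt Mm P : Matrix (Fin n) (Fin n) ℂ)
    (hQH : Qᴴ = Q) (hQQ : Q * Q = P) (hQi2 : Qi * Q = 1)
    (hconj : Mt = Q * Mm * Qi) (hn : ‖Mt‖ ≤ 1) (u : Fin n → ℂ) :
    (star (Mm *ᵥ u) ⬝ᵥ (P *ᵥ (Mm *ᵥ u))).re ≤ (star u ⬝ᵥ (P *ᵥ u)).re := by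
  have hQM : Q *ᵥ (Mm *ᵥ u) = Mt *ᵥ (Q *ᵥ u) := by
    rw [hconj, Matrix.mulVec_mulVec, Matrix.mulVec_mulVec]
    congr 1
    rw [Matrix.mul_assoc (Q * Mm), hQi2, Matrix.mul_one]
  rw [quad_re hQH hQQ (Mm *ᵥ u), quad_re hQH hQQ u, hQM]
  have hle : nrm (Mt *ᵥ (Q *ᵥ u)) ≤ nrm (Q *ᵥ u) := by
    calc nrm (Mt *ᵥ (Q *ᵥ u)) ≤ ‖Mt‖ * nrm (Q *ᵥ u) := nrm_mulVec_le _ _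
      _ ≤ 1 * nrm (Q *ᵥ u) := mul_le_mul_of_nonneg_right hn (nrm_nonneg _)
      _ = nrm (Q *ᵥ u) := one_mul _
  nlinarith [nrm_nonneg (Mt *ᵥ (Q *ᵥ u)), nrm_nonneg (Q *ᵥ u)]

/-- An explicit Runge–Kutta stability function is strongly stable iff it is
strongly stable w.r.t. asymptotically stable, semi-dissipative matrices (in spectral norm)
and w.r.t. purely imaginary scalars. -/
theorem stmt0 (c : ℕ → ℝ) (p s : ℕ) (h : IsStabilityFunction c p s) :
    StronglyStable c s ↔
      ((∀ (n : ℕ) (L : Matrix (Fin n) (Fin n) ℂ), IsSemiDissipative L → IsAsympStable L →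
          ∃ τ₀ > (0:ℝ), ∀ τ : ℝ, 0 < τ → τ ≤ τ₀ → ‖stabFunMat c s ((τ:ℂ) • L)‖ ≤ 1) ∧
       (∀ y : ℝ, ∃ τ₀ > (0:ℝ), ∀ τ : ℝ, 0 < τ → τ ≤ τ₀ →
          ‖stabFun c s (Complex.I * (τ:ℂ) * (y:ℂ))‖ ≤ 1)) := by
  constructor
  · intro hSS
    constructor
    · -- (a): take P = 1
      intro n L hsd _
      have hpsd : (-(Lᴴ * 1 + 1 * L)).PosSemidef := by
        rw [Matrix.mul_one, Matrix.one_mul]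
        have h2 : -(Lᴴ + L) = ((2:ℝ):ℂ) • (-(hermPart L)) := by
          rw [hermPart]
          ext i j
          simp
          ring
        rw [h2]
        exact psd_smul_real hsd (by norm_num)
      obtain ⟨τ₀, hτ₀, hI⟩ := hSS n L 1 posDef_one hpsd
      refine ⟨τ₀, hτ₀, fun τ hτ hτle => ?_⟩
      apply opNorm_le_of _ zero_le_one
      intro u
      rw [one_mul]
      have h := hI τ hτ hτle u
      rw [Matrix.one_mulVec, Matrix.one_mulVec, re_dot, re_dot] at h
      nlinarith [nrm_nonneg (stabFunMat c s ((τ:ℂ) • L) *ᵥ u), nrm_nonneg u]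
    · -- (b): 1×1 imaginary scalar
      intro y
      set L : Matrix (Fin 1) (Fin 1) ℂ := (Complex.I * (y:ℂ)) • 1 with hLdef
      have hpsd : (-(Lᴴ * 1 + 1 * L)).PosSemidef := by
        have hz : -(Lᴴ * 1 + 1 * L) = 0 := by
          rw [Matrix.mul_one, Matrix.one_mul, hLdef, conjTranspose_smul, conjTranspose_one]
          rw [← add_smul]
          have : star (Complex.I * (y:ℂ)) + Complex.I * (y:ℂ) = 0 := by
            simp [Complex.ext_iff]
          rw [this, zero_smul, neg_zero]
        rw [hz]
        exact psd_zero
      obtain ⟨τ₀, hτ₀, hI⟩ := hSS 1 L 1 posDef_one hpsd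
      refine ⟨τ₀, hτ₀, fun τ hτ hτle => ?_⟩
      have h := hI τ hτ hτle (fun _ => 1)
      have hmat : stabFunMat c s ((τ:ℂ) • L)
          = stabFun c s (Complex.I * (τ:ℂ) * (y:ℂ)) • 1 := by
        rw [hLdef, smul_smul, show (τ:ℂ) * (Complex.I * (y:ℂ)) = Complex.I * (τ:ℂ) * (y:ℂ)
          from by ring, scalar_stabFunMat]
      rw [hmat] at h
      set r := stabFun c s (Complex.I * (τ:ℂ) * (y:ℂ)) with hr
      have hcomp : ((star ((r • (1 : Matrix (Fin 1) (Fin 1) ℂ)) *ᵥ (fun _ => 1)))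
          ⬝ᵥ ((1 : Matrix (Fin 1) (Fin 1) ℂ) *ᵥ ((r • (1 : Matrix (Fin 1) (Fin 1) ℂ))
            *ᵥ (fun _ => 1)))).re = ‖r‖ ^ 2 := by
        rw [Matrix.one_mulVec, smul_mulVec, Matrix.one_mulVec, re_dot, nrm_smul]
        have hsq : (nrm (fun _ => (1:ℂ) : Fin 1 → ℂ)) ^ 2 = 1 := by
          rw [nrm_sq]
          simp
        have hnn := nrm_nonneg (fun _ => (1:ℂ) : Fin 1 → ℂ)
        have h1 : nrm (fun _ => (1:ℂ) : Fin 1 → ℂ) = 1 := by nlinarith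
        rw [h1, mul_one]
      rw [hcomp] at h
      have hone : ((star (fun _ => (1:ℂ) : Fin 1 → ℂ))
          ⬝ᵥ ((1 : Matrix (Fin 1) (Fin 1) ℂ) *ᵥ (fun _ => 1))).re = 1 := by
        rw [Matrix.one_mulVec, re_dot, nrm_sq]
        simp
      rw [hone] at h
      nlinarith [norm_nonneg r]
  · rintro ⟨ha, hb⟩
    intro n L P hP hPL
    open scoped MatrixOrder in set Q := CFC.sqrt P with hQdef
    have hQpsd : Q.PosSemidef := by open scoped MatrixOrder in exact (CFC.sqrt_nonneg P).posSemidef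
    have hQH : Qᴴ = Q := hQpsd.1
    have hQQ : Q * Q = P := by
      open scoped MatrixOrder in exact CFC.sqrt_mul_sqrt_self P hP.posSemidef.nonneg
    have hdet : IsUnit Q.det := by
      have hdP : P.det ≠ 0 := ne_of_gt hP.det_pos
      have : Q.det * Q.det = P.det := by rw [← Matrix.det_mul, hQQ]
      rw [isUnit_iff_ne_zero]
      intro h0
      rw [h0, mul_zero] at this
      exact hdP this.symm
    have hQi1 : Q * Q⁻¹ = 1 := Matrix.mul_nonsing_inv Q hdet
    have hQi2 : Q⁻¹ * Q = 1 := Matrix.nonsing_inv_mul Q hdet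
    have hQiH : Q⁻¹ᴴ = Q⁻¹ := by rw [Matrix.conjTranspose_nonsing_inv, hQH]
    set Lt := Q * L * Q⁻¹ with hLt
    have hLtsd : IsSemiDissipative Lt := by
      have he1 : Lt + Ltᴴ = Q⁻¹ * (P * L + Lᴴ * P) * Q⁻¹ := by
        have hLtH : Ltᴴ = Q⁻¹ * Lᴴ * Q := by
          rw [hLt, conjTranspose_mul, conjTranspose_mul, hQiH, hQH, Matrix.mul_assoc]
        rw [hLt, hLtH, ← hQQ]
        calc Q * L * Q⁻¹ + Q⁻¹ * Lᴴ * Q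
            = (Q⁻¹ * Q) * (Q * L * Q⁻¹) + Q⁻¹ * Lᴴ * Q * (Q * Q⁻¹) := by
              rw [hQi1, hQi2, one_mul, mul_one]
          _ = Q⁻¹ * (Q * Q * L + Lᴴ * (Q * Q)) * Q⁻¹ := by noncomm_ring
      rw [IsSemiDissipative, hermPart]
      have he2 : -((1/2 : ℂ) • (Lt + Ltᴴ))
          = ((1/2 : ℝ) : ℂ) • (Q⁻¹ᴴ * (-(Lᴴ * P + P * L)) * Q⁻¹) := by
        rw [he1, hQiH]
        rw [show ((1/2 : ℝ) : ℂ) = (1/2 : ℂ) from by norm_num]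
        rw [← smul_neg]
        congr 1
        noncomm_ring
      rw [he2]
      exact psd_smul_real (hPL.conjTranspose_mul_mul_same Q⁻¹) (by norm_num)
    obtain ⟨τ₀, hτ₀, hbound⟩ := key_lemma c s ha hb n Lt hLtsd
    refine ⟨τ₀, hτ₀, fun τ hτ hτle u => ?_⟩
    have hconj : stabFunMat c s ((τ:ℂ) • Lt) = Q * stabFunMat c s ((τ:ℂ) • L) * Q⁻¹ := by
      rw [show (τ:ℂ) • Lt = Q * ((τ:ℂ) • L) * Q⁻¹ from (smul_comm_conj _ _ _ _).symm,
        stabFunMat_conj c s Q Q⁻¹ _ hQi1 hQi2]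
    exact quad_mono Q Q⁻¹ (stabFunMat c s ((τ:ℂ) • Lt)) (stabFunMat c s ((τ:ℂ) • L)) P
      hQH hQQ hQi2 hconj (hbound τ hτ hτle) u
end
end

section
/- Let R be a stability function of order p ∈ ℕ with s stages. If p is odd and γ_{p+1} := (−1)^{(p+1)/2}(1 − c_{p+1}) > 0, or if p is even and δ_{p+1} := (−1)^{p/2}(c_{p+2} − (p+2)c_{p+1} + (p+1)) > 0, then R is locally stable on the imaginary axis, i.e., there exists Z > 0 such that |R(iy)| ≤ 1 for all y ∈ ℝ with |y| ≤ Z. -/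
open Matrix Polynomial
open scoped Matrix.Norms.L2Operator ComplexOrder

noncomputable section

namespace Stmt6Aux

open Complex Finset

lemma base_sum (m : ℕ) (hm : m ≠ 0) :
    ∑ jk ∈ Finset.HasAntidiagonal.antidiagonal m,
      Complex.I ^ jk.1 * (-Complex.I) ^ jk.2 / ((jk.1.factorial : ℂ) * (jk.2.factorial : ℂ)) = 0 := by
  have key : ∀ jk ∈ Finset.HasAntidiagonal.antidiagonal m,
      Complex.I ^ jk.1 * (-Complex.I) ^ jk.2 / ((jk.1.factorial : ℂ) * (jk.2.factorial : ℂ))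
      = (m.factorial : ℂ)⁻¹ *
        (Complex.I ^ jk.1 * (-Complex.I) ^ (m - jk.1) * (m.choose jk.1 : ℂ)) := by
    rintro ⟨j, k⟩ hjk
    rw [Finset.HasAntidiagonal.mem_antidiagonal] at hjk
    subst hjk
    have hfact : ((k + j).choose j * k.factorial * j.factorial : ℕ) = (k + j).factorial :=
      Nat.add_choose_mul_factorial_mul_factorial k j
    rw [add_comm k j] at hfact
    have hsub : (j + k) - j = k := by omega
    rw [hsub]
    have h1 : (j.factorial : ℂ) ≠ 0 := Nat.cast_ne_zero.mpr (Nat.factorial_ne_zero j)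
    have h2 : (k.factorial : ℂ) ≠ 0 := Nat.cast_ne_zero.mpr (Nat.factorial_ne_zero k)
    have h3 : ((j + k).factorial : ℂ) ≠ 0 := Nat.cast_ne_zero.mpr (Nat.factorial_ne_zero _)
    field_simp
    have hcast : (((j + k).choose j : ℂ)) * (k.factorial : ℂ) * (j.factorial : ℂ)
        = ((j + k).factorial : ℂ) := by exact_mod_cast congrArg (Nat.cast : ℕ → ℂ) hfact
    linear_combination (-1:ℂ) * hcast
  rw [Finset.sum_congr rfl key, ← Finset.mul_sum]
  have h4 : ∑ jk ∈ Finset.HasAntidiagonal.antidiagonal m,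
      Complex.I ^ jk.1 * (-Complex.I) ^ (m - jk.1) * (m.choose jk.1 : ℂ)
      = (Complex.I + (-Complex.I)) ^ m := by
    rw [add_pow, Finset.Nat.sum_antidiagonal_eq_sum_range_succ_mk]
  rw [h4]
  simp [hm]

def Apoly (c : ℕ → ℝ) (s : ℕ) (ε : ℂ) : Polynomial ℂ :=
  ∑ j ∈ Finset.range (s + 1), Polynomial.C ((c j : ℂ) / (j.factorial : ℂ) * ε ^ j) * Polynomial.X ^ j

lemma Apoly_coeff {c : ℕ → ℝ} {s : ℕ} (hc : ∀ j, s < j → c j = 0) (ε : ℂ) (m : ℕ) :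
    (Apoly c s ε).coeff m = (c m : ℂ) / (m.factorial : ℂ) * ε ^ m := by
  rw [Apoly, Polynomial.finset_sum_coeff]
  simp only [Polynomial.coeff_C_mul, Polynomial.coeff_X_pow, mul_ite, mul_one, mul_zero]
  rw [Finset.sum_ite_eq]
  by_cases hms : m ∈ Finset.range (s + 1)
  · simp [hms]
  · rw [Finset.mem_range] at hms
    simp [Finset.mem_range, hc m (by omega), hms]

lemma Apoly_eval (c : ℕ → ℝ) (s : ℕ) (ε y : ℂ) :
    (Apoly c s ε).eval y = stabFun c s (ε * y) := by
  rw [Apoly, stabFun, Polynomial.eval_finset_sum]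
  refine Finset.sum_congr rfl fun j _ => ?_
  simp only [Polynomial.eval_mul, Polynomial.eval_C, Polynomial.eval_pow, Polynomial.eval_X]
  rw [mul_pow]; ring

lemma stabFun_conj (c : ℕ → ℝ) (s : ℕ) (y : ℝ) :
    (starRingEnd ℂ) (stabFun c s (Complex.I * (y : ℂ))) = stabFun c s (-Complex.I * (y : ℂ)) := by
  rw [stabFun, map_sum]
  refine Finset.sum_congr rfl fun j _ => ?_
  simp [map_div₀, _root_.map_mul, map_pow, Complex.conj_ofReal, Complex.conj_I]

end Stmt6Aux

namespace Stmt6Aux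

lemma tail (c : ℕ → ℝ) (s : ℕ) (F : Polynomial ℂ) (q : ℕ)
    (hF : ∀ y : ℝ, (F.eval (y:ℂ)).re = Complex.normSq (stabFun c s (Complex.I * (y:ℂ))) - 1)
    (hq : Even q) (h0 : ∀ m < q, F.coeff m = 0) (hneg : (F.coeff q).re < 0) :
    ∃ Z > (0:ℝ), ∀ y : ℝ, |y| ≤ Z → ‖stabFun c s (Complex.I * (y:ℂ))‖ ≤ 1 := by
  obtain ⟨G, hG⟩ := (Polynomial.X_pow_dvd_iff).mpr h0
  have hG0 : G.coeff 0 = F.coeff q := by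
    rw [hG]
    simpa using (Polynomial.coeff_X_pow_mul G q 0).symm
  set g : ℝ → ℝ := fun y => (G.eval (y:ℂ)).re with hg
  have hcont : Continuous g := by
    exact Complex.continuous_re.comp ((G.continuous_aeval).comp Complex.continuous_ofReal)
  have hg0 : g 0 < 0 := by
    have h1 : G.eval ((0:ℝ):ℂ) = G.coeff 0 := by
      rw [show ((0:ℝ):ℂ) = 0 by norm_num, ← Polynomial.coeff_zero_eq_eval_zero]
    simp only [hg]
    rw [h1, hG0]
    exact hneg
  have hmem : {y : ℝ | g y < 0} ∈ nhds (0:ℝ) :=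
    (isOpen_lt hcont continuous_const).mem_nhds hg0
  obtain ⟨ε, hε, hball⟩ := Metric.mem_nhds_iff.mp hmem
  refine ⟨ε/2, by linarith, fun y hy => ?_⟩
  have hy' : g y < 0 := by
    apply hball
    rw [Metric.mem_ball, Real.dist_eq, sub_zero]
    calc |y| ≤ ε/2 := hy
      _ < ε := by linarith
  have hevF : (F.eval (y:ℂ)).re = y^q * g y := by
    rw [hG]
    simp only [Polynomial.eval_mul, Polynomial.eval_pow, Polynomial.eval_X]
    rw [show ((y:ℂ))^q = (((y^q:ℝ)):ℂ) by push_cast; ring, Complex.re_ofReal_mul]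
  have hle : Complex.normSq (stabFun c s (Complex.I * (y:ℂ))) ≤ 1 := by
    have h2 := hF y
    rw [hevF] at h2
    have h3 : y^q * g y ≤ 0 :=
      mul_nonpos_of_nonneg_of_nonpos (Even.pow_nonneg hq y) hy'.le
    linarith
  have habs := Complex.sq_norm (stabFun c s (Complex.I * (y:ℂ)))
  nlinarith [norm_nonneg (stabFun c s (Complex.I * (y:ℂ)))]

end Stmt6Aux

/-- positivity of `γ_{p+1}` (odd `p`) resp. `δ_{p+1}` (even `p`) implies local
stability on the imaginary axis. -/
theorem stmt6 (c : ℕ → ℝ) (p s : ℕ) (h : IsStabilityFunction c p s)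
    (hcond :
      (Odd p ∧ 0 < (-1 : ℝ) ^ ((p + 1) / 2) * (1 - c (p + 1))) ∨
      (Even p ∧ 0 < (-1 : ℝ) ^ (p / 2) * (c (p + 2) - (p + 2) * c (p + 1) + (p + 1)))) :
    ∃ Z > (0:ℝ), ∀ y : ℝ, |y| ≤ Z → ‖stabFun c s (Complex.I * (y:ℂ))‖ ≤ 1 := by
  classical
  set F : Polynomial ℂ :=
    Stmt6Aux.Apoly c s Complex.I * Stmt6Aux.Apoly c s (-Complex.I) - 1 with hFdef
  have hF : ∀ y : ℝ, (F.eval (y:ℂ)).re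
      = Complex.normSq (stabFun c s (Complex.I * (y:ℂ))) - 1 := by
    intro y
    have h1 : F.eval (y:ℂ)
        = ((Complex.normSq (stabFun c s (Complex.I * (y:ℂ))) : ℝ) : ℂ) - 1 := by
      rw [hFdef]
      simp only [Polynomial.eval_sub, Polynomial.eval_mul, Polynomial.eval_one]
      rw [Stmt6Aux.Apoly_eval, Stmt6Aux.Apoly_eval, ← Stmt6Aux.stabFun_conj c s y,
        Complex.mul_conj]
    rw [h1]
    simp
  have hcoeffT : ∀ m, F.coeff m = (∑ jk ∈ Finset.HasAntidiagonal.antidiagonal m,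
      ((c jk.1 : ℂ) * (c jk.2 : ℂ)) * (Complex.I ^ jk.1 * (-Complex.I) ^ jk.2)
        / ((jk.1.factorial : ℂ) * (jk.2.factorial : ℂ)))
      - (if m = 0 then 1 else 0) := by
    intro m
    rw [hFdef, Polynomial.coeff_sub, Polynomial.coeff_mul, Polynomial.coeff_one]
    congr 1
    refine Finset.sum_congr rfl fun jk _ => ?_
    rw [Stmt6Aux.Apoly_coeff h.high, Stmt6Aux.Apoly_coeff h.high]
    ring
  -- splitting off the correction terms
  have hsplit : ∀ m, m ≠ 0 → F.coeff m = ∑ jk ∈ Finset.HasAntidiagonal.antidiagonal m,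
      ((c jk.1 : ℂ) * (c jk.2 : ℂ) - 1) * (Complex.I ^ jk.1 * (-Complex.I) ^ jk.2)
        / ((jk.1.factorial : ℂ) * (jk.2.factorial : ℂ)) := by
    intro m hm
    rw [hcoeffT, if_neg hm, sub_zero]
    have h2 : (∑ jk ∈ Finset.HasAntidiagonal.antidiagonal m,
        ((c jk.1 : ℂ) * (c jk.2 : ℂ)) * (Complex.I ^ jk.1 * (-Complex.I) ^ jk.2)
          / ((jk.1.factorial : ℂ) * (jk.2.factorial : ℂ)))
        = (∑ jk ∈ Finset.HasAntidiagonal.antidiagonal m,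
        ((c jk.1 : ℂ) * (c jk.2 : ℂ) - 1) * (Complex.I ^ jk.1 * (-Complex.I) ^ jk.2)
          / ((jk.1.factorial : ℂ) * (jk.2.factorial : ℂ)))
        + (∑ jk ∈ Finset.HasAntidiagonal.antidiagonal m,
        Complex.I ^ jk.1 * (-Complex.I) ^ jk.2
          / ((jk.1.factorial : ℂ) * (jk.2.factorial : ℂ))) := by
      rw [← Finset.sum_add_distrib]
      refine Finset.sum_congr rfl fun jk _ => ?_
      ring
    rw [h2, Stmt6Aux.base_sum m hm, add_zero]
  have hvan : ∀ m, m ≤ p → F.coeff m = 0 := by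
    intro m hm
    rcases Nat.eq_zero_or_pos m with h0 | h0
    · subst h0
      rw [hcoeffT]
      simp [h.low 0 (by omega)]
    · rw [hsplit m (by omega)]
      refine Finset.sum_eq_zero fun jk hjk => ?_
      rw [Finset.HasAntidiagonal.mem_antidiagonal] at hjk
      rw [h.low jk.1 (by omega), h.low jk.2 (by omega)]
      simp
  -- correction at level m supported on large indices
  have hlarge : ∀ (m : ℕ) (E : Finset (ℕ × ℕ)), m ≠ 0 → E ⊆ Finset.HasAntidiagonal.antidiagonal m →
      (∀ jk ∈ Finset.HasAntidiagonal.antidiagonal m, jk ∉ E → jk.1 ≤ p ∧ jk.2 ≤ p) →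
      F.coeff m = ∑ jk ∈ E,
        ((c jk.1 : ℂ) * (c jk.2 : ℂ) - 1) * (Complex.I ^ jk.1 * (-Complex.I) ^ jk.2)
          / ((jk.1.factorial : ℂ) * (jk.2.factorial : ℂ)) := by
    intro m E hm hsub hout
    rw [hsplit m hm]
    refine (Finset.sum_subset hsub fun jk hjk hnk => ?_).symm
    obtain ⟨hj, hk⟩ := hout jk hjk hnk
    rw [h.low jk.1 hj, h.low jk.2 hk]
    simp
  have hc0 : c 0 = 1 := h.low 0 (by omega)
  have hc1 : c 1 = 1 := h.low 1 h.pos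
  rcases hcond with ⟨hodd, hpos⟩ | ⟨heven, hpos⟩
  · -- p odd, q = p + 1
    obtain ⟨t, ht⟩ := hodd
    have hq2 : p + 1 = 2 * (t + 1) := by omega
    have hcq : F.coeff (p+1) = ∑ jk ∈ ({(p+1, 0), (0, p+1)} : Finset (ℕ × ℕ)),
        ((c jk.1 : ℂ) * (c jk.2 : ℂ) - 1) * (Complex.I ^ jk.1 * (-Complex.I) ^ jk.2)
          / ((jk.1.factorial : ℂ) * (jk.2.factorial : ℂ)) := by
      apply hlarge (p+1) _ (by omega)
      · intro x hx
        simp only [Finset.mem_insert, Finset.mem_singleton] at hx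
        rcases hx with rfl | rfl <;> simp [Finset.HasAntidiagonal.mem_antidiagonal]
      · intro jk hjk hnk
        rw [Finset.HasAntidiagonal.mem_antidiagonal] at hjk
        simp only [Finset.mem_insert, Finset.mem_singleton] at hnk
        constructor
        · by_contra hj
          exact hnk (Or.inl (by
            have : jk.1 = p + 1 ∧ jk.2 = 0 := by omega
            exact Prod.ext this.1 this.2))
        · by_contra hk
          exact hnk (Or.inr (by
            have : jk.1 = 0 ∧ jk.2 = p + 1 := by omega
            exact Prod.ext this.1 this.2))
    rw [Finset.sum_pair (by intro hcon; rw [Prod.mk.injEq] at hcon; omega)] at hcq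
    have hI : Complex.I ^ (p+1) = (((-1:ℝ) ^ (t+1) : ℝ) : ℂ) := by
      rw [hq2, pow_mul, Complex.I_sq]
      push_cast
      ring
    have hnI : (-Complex.I) ^ (p+1) = Complex.I ^ (p+1) :=
      Even.neg_pow ⟨t+1, by omega⟩ _
    have hval : F.coeff (p+1)
        = (((-2 * ((-1:ℝ) ^ ((p+1)/2) * (1 - c (p+1))) / ((p+1).factorial : ℝ)) : ℝ) : ℂ) := by
      rw [hcq, hnI, hI, hc0, show (p+1)/2 = t+1 from by omega]
      push_cast
      simp only [Nat.factorial_zero]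
      ring
    apply Stmt6Aux.tail c s F (p+1) hF ⟨t+1, by omega⟩
    · intro m hm
      exact hvan m (by omega)
    · rw [hval, Complex.ofReal_re]
      apply div_neg_of_neg_of_pos
      · nlinarith
      · positivity
  · -- p even, q = p + 2
    obtain ⟨t, ht⟩ := heven
    have hp2 : 2 ≤ p := by have := h.pos; omega
    have hcq : F.coeff (p+2) = ∑ jk ∈
        ({(p+2, 0), (0, p+2), (p+1, 1), (1, p+1)} : Finset (ℕ × ℕ)),
        ((c jk.1 : ℂ) * (c jk.2 : ℂ) - 1) * (Complex.I ^ jk.1 * (-Complex.I) ^ jk.2)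
          / ((jk.1.factorial : ℂ) * (jk.2.factorial : ℂ)) := by
      apply hlarge (p+2) _ (by omega)
      · intro x hx
        simp only [Finset.mem_insert, Finset.mem_singleton] at hx
        rcases hx with rfl | rfl | rfl | rfl <;> simp [Finset.HasAntidiagonal.mem_antidiagonal] <;> omega
      · rintro ⟨a, b⟩ hjk hnk
        rw [Finset.HasAntidiagonal.mem_antidiagonal] at hjk
        simp only [Finset.mem_insert, Finset.mem_singleton, Prod.mk.injEq] at hnk
        push_neg at hnk
        simp only at hjk
        constructor <;> simp only <;> omega
    have hsum4 : ∑ jk ∈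
        ({(p+2, 0), (0, p+2), (p+1, 1), (1, p+1)} : Finset (ℕ × ℕ)),
        ((c jk.1 : ℂ) * (c jk.2 : ℂ) - 1) * (Complex.I ^ jk.1 * (-Complex.I) ^ jk.2)
          / ((jk.1.factorial : ℂ) * (jk.2.factorial : ℂ))
        = ((c (p+2) : ℂ) * (c 0 : ℂ) - 1) * (Complex.I ^ (p+2) * (-Complex.I) ^ 0)
            / (((p+2).factorial : ℂ) * ((0).factorial : ℂ))
        + ((c 0 : ℂ) * (c (p+2) : ℂ) - 1) * (Complex.I ^ 0 * (-Complex.I) ^ (p+2))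
            / (((0).factorial : ℂ) * ((p+2).factorial : ℂ))
        + ((c (p+1) : ℂ) * (c 1 : ℂ) - 1) * (Complex.I ^ (p+1) * (-Complex.I) ^ 1)
            / (((p+1).factorial : ℂ) * ((1).factorial : ℂ))
        + ((c 1 : ℂ) * (c (p+1) : ℂ) - 1) * (Complex.I ^ 1 * (-Complex.I) ^ (p+1))
            / (((1).factorial : ℂ) * ((p+1).factorial : ℂ)) := by
      rw [Finset.sum_insert (by
          intro hmem
          rw [Finset.mem_insert, Finset.mem_insert, Finset.mem_singleton] at hmem
          rcases hmem with h9 | h9 | h9 <;> (rw [Prod.mk.injEq] at h9; omega)),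
        Finset.sum_insert (by
          intro hmem
          rw [Finset.mem_insert, Finset.mem_singleton] at hmem
          rcases hmem with h9 | h9 <;> (rw [Prod.mk.injEq] at h9; omega)),
        Finset.sum_insert (by
          intro hmem
          rw [Finset.mem_singleton] at hmem
          rw [Prod.mk.injEq] at hmem
          omega),
        Finset.sum_singleton]
      ring
    have hIe : Complex.I ^ (2*t) = (((-1:ℝ) ^ t : ℝ) : ℂ) := by
      rw [pow_mul, Complex.I_sq]
      push_cast
      ring
    have hI1 : Complex.I ^ (p+1) = (((-1:ℝ) ^ t : ℝ) : ℂ) * Complex.I := by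
      rw [show p + 1 = 2*t + 1 from by omega, pow_succ, hIe]
    have hI2 : Complex.I ^ (p+2) = -(((-1:ℝ) ^ t : ℝ) : ℂ) := by
      rw [show p + 2 = 2*t + 1 + 1 from by omega, pow_succ,
        show (2*t+1) = p + 1 from by omega, hI1, mul_assoc, Complex.I_mul_I]
      ring
    have hnI2 : (-Complex.I) ^ (p+2) = Complex.I ^ (p+2) :=
      Even.neg_pow ⟨t+1, by omega⟩ _
    have hnI1 : (-Complex.I) ^ (p+1) = -(Complex.I ^ (p+1)) :=
      Odd.neg_pow ⟨t, by omega⟩ _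
    have hT3 : Complex.I ^ (p+1) * (-Complex.I) ^ 1 = (((-1:ℝ) ^ t : ℝ) : ℂ) := by
      rw [hI1, pow_one]
      linear_combination (-((((-1:ℝ) ^ t : ℝ) : ℂ))) * Complex.I_mul_I
    have hT4 : Complex.I ^ 1 * (-Complex.I) ^ (p+1) = (((-1:ℝ) ^ t : ℝ) : ℂ) := by
      rw [hnI1, hI1, pow_one]
      linear_combination (-((((-1:ℝ) ^ t : ℝ) : ℂ))) * Complex.I_mul_I
    have hfqC : (((p+2).factorial : ℂ)) = ((p:ℂ)+2) * ((p+1).factorial : ℂ) := by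
      rw [show p + 2 = (p+1) + 1 from rfl, Nat.factorial_succ]
      push_cast
      ring
    have hne1 : ((p+1).factorial : ℂ) ≠ 0 := Nat.cast_ne_zero.mpr (Nat.factorial_ne_zero _)
    have hne2 : ((p:ℂ) + 2) ≠ 0 := by
      have h9 : ((p:ℂ)+2) = ((p+2 : ℕ) : ℂ) := by push_cast; ring
      rw [h9]
      exact Nat.cast_ne_zero.mpr (by omega)
    have hval : F.coeff (p+2)
        = (((-2 * ((-1:ℝ) ^ (p/2) * (c (p+2) - (p+2) * c (p+1) + (p+1)))
            / (((p+2) : ℝ) * ((p+1).factorial : ℝ))) : ℝ) : ℂ) := by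
      rw [hcq, hsum4, hT3, hT4, hnI2, hI2, hc0, hc1, hfqC, show p/2 = t from by omega]
      simp only [Nat.factorial_zero, Nat.factorial_one, Nat.cast_one, pow_zero,
        mul_one, one_mul]
      push_cast
      have hD : ((p:ℂ) + 2) * (((p+1).factorial : ℕ) : ℂ) ≠ 0 := mul_ne_zero hne2 hne1
      rw [div_add_div _ _ hD hD, div_add_div _ _ (mul_ne_zero hD hD) hne1,
        div_add_div _ _ (mul_ne_zero (mul_ne_zero hD hD) hne1) hne1,
        div_eq_div_iff (mul_ne_zero (mul_ne_zero (mul_ne_zero hD hD) hne1) hne1) hD]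
      ring
    apply Stmt6Aux.tail c s F (p+2) hF ⟨t+1, by omega⟩
    · intro m hm
      rcases Nat.lt_or_ge m (p+1) with h1 | h1
      · exact hvan m (by omega)
      · have hm1 : m = p + 1 := by omega
        subst hm1
        have hcq1 : F.coeff (p+1) = ∑ jk ∈ ({(p+1, 0), (0, p+1)} : Finset (ℕ × ℕ)),
            ((c jk.1 : ℂ) * (c jk.2 : ℂ) - 1) * (Complex.I ^ jk.1 * (-Complex.I) ^ jk.2)
              / ((jk.1.factorial : ℂ) * (jk.2.factorial : ℂ)) := by
          apply hlarge (p+1) _ (by omega)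
          · intro x hx
            simp only [Finset.mem_insert, Finset.mem_singleton] at hx
            rcases hx with rfl | rfl <;> simp [Finset.HasAntidiagonal.mem_antidiagonal] <;> omega
          · rintro ⟨a, b⟩ hjk hnk
            rw [Finset.HasAntidiagonal.mem_antidiagonal] at hjk
            simp only [Finset.mem_insert, Finset.mem_singleton, Prod.mk.injEq] at hnk
            push_neg at hnk
            simp only at hjk
            constructor <;> simp only <;> omega
        rw [Finset.sum_pair (by intro hcon; rw [Prod.mk.injEq] at hcon; omega)] at hcq1
        rw [hcq1, hnI1, hc0]
        ring
    · rw [hval, Complex.ofReal_re]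
      apply div_neg_of_neg_of_pos
      · nlinarith
      · positivity
end
end

section
/- Let R be a stability function of order p ∈ ℕ with s stages. If p is odd and γ_{p+1} := (−1)^{(p+1)/2}(1 − c_{p+1}) < 0, or if p is even and δ_{p+1} := (−1)^{p/2}(c_{p+2} − (p+2)c_{p+1} + (p+1)) < 0, then R is not locally stable on the imaginary axis: for every Z > 0 there exists y ∈ ℝ with 0 < |y| ≤ Z and |R(iy)| > 1. -/
open Matrix Polynomial
open scoped Matrix.Norms.L2Operator ComplexOrder

noncomputable section

section Aux
open Complex

def Pgen (c : ℕ → ℝ) (s : ℕ) (w : ℂ) : Polynomial ℂ :=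
  ∑ j ∈ Finset.range (s + 1), C ((c j : ℂ) * w ^ j / (j.factorial : ℂ)) * X ^ j

lemma Pgen_coeff {c : ℕ → ℝ} {p s : ℕ} (h : IsStabilityFunction c p s) (w : ℂ) (k : ℕ) :
    (Pgen c s w).coeff k = (c k : ℂ) * w ^ k / (k.factorial : ℂ) := by
  rw [Pgen, finset_sum_coeff]
  simp only [coeff_C_mul, coeff_X_pow, mul_ite, mul_one, mul_zero]
  rw [Finset.sum_ite_eq (Finset.range (s+1)) k]
  by_cases hk : k ∈ Finset.range (s+1)
  · simp [hk]
  · simp only [hk, if_false]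
    rw [h.high k (by simpa using hk)]
    simp

lemma Pgen_eval (c : ℕ → ℝ) (s : ℕ) (w z : ℂ) : (Pgen c s w).eval z = stabFun c s (w * z) := by
  rw [Pgen, stabFun, eval_finset_sum]
  refine Finset.sum_congr rfl fun j _ => ?_
  simp [mul_pow]
  ring

lemma stabFun_conj (c : ℕ → ℝ) (s : ℕ) (z : ℂ) :
    (starRingEnd ℂ) (stabFun c s z) = stabFun c s ((starRingEnd ℂ) z) := by
  rw [stabFun, stabFun, map_sum]
  refine Finset.sum_congr rfl fun j _ => ?_
  simp [map_div₀, _root_.map_mul, map_pow, Complex.conj_ofReal]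

lemma sum_div_factorial (x y : ℂ) (k : ℕ) :
    ∑ m ∈ Finset.range (k+1), x ^ m * y ^ (k - m) / ((m.factorial : ℂ) * ((k-m).factorial : ℂ))
      = (x + y) ^ k / (k.factorial : ℂ) := by
  rw [add_pow, Finset.sum_div]
  refine Finset.sum_congr rfl fun m hm => ?_
  have hmk : m ≤ k := Nat.lt_succ_iff.mp (Finset.mem_range.mp hm)
  have hfac : ((k.choose m : ℂ) * m.factorial * (k-m).factorial) = k.factorial := by
    exact_mod_cast congrArg (Nat.cast : ℕ → ℂ) (Nat.choose_mul_factorial_mul_factorial hmk)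
  have h1 : (m.factorial : ℂ) ≠ 0 := Nat.cast_ne_zero.mpr m.factorial_ne_zero
  have h2 : (((k-m).factorial : ℂ)) ≠ 0 := Nat.cast_ne_zero.mpr (k-m).factorial_ne_zero
  have h3 : ((k.factorial : ℂ)) ≠ 0 := Nat.cast_ne_zero.mpr k.factorial_ne_zero
  field_simp
  linear_combination (-(x ^ m * y ^ (k - m))) * hfac

def Qpoly (c : ℕ → ℝ) (s : ℕ) : Polynomial ℂ :=
  Pgen c s Complex.I * Pgen c s (-Complex.I) - 1

def Ecorr (c : ℕ → ℝ) (k : ℕ) : ℂ :=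
  ∑ m ∈ Finset.range (k+1), ((c m : ℂ) * (c (k-m) : ℂ) - 1) *
    (Complex.I ^ m * (-Complex.I) ^ (k-m)) / ((m.factorial : ℂ) * ((k-m).factorial : ℂ))

lemma Qpoly_coeff {c : ℕ → ℝ} {p s : ℕ} (h : IsStabilityFunction c p s) (k : ℕ) (hk : k ≠ 0) :
    (Qpoly c s).coeff k = Ecorr c k := by
  rw [Qpoly, coeff_sub, coeff_mul, Finset.Nat.sum_antidiagonal_eq_sum_range_succ_mk]
  simp only [Pgen_coeff h]
  have split : ∀ m ∈ Finset.range (k+1),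
      (c m : ℂ) * I ^ m / (m.factorial : ℂ) *
          ((c (k-m) : ℂ) * (-I) ^ (k-m) / ((k-m).factorial : ℂ))
        = ((c m : ℂ) * (c (k-m) : ℂ) - 1) * (I ^ m * (-I) ^ (k-m)) /
            ((m.factorial : ℂ) * ((k-m).factorial : ℂ))
          + I ^ m * (-I) ^ (k-m) / ((m.factorial : ℂ) * ((k-m).factorial : ℂ)) :=
    fun m _ => by ring
  rw [Finset.sum_congr rfl split, Finset.sum_add_distrib, sum_div_factorial I (-I) k]
  simp [Ecorr, hk, zero_pow hk, Polynomial.coeff_one]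

lemma Qpoly_coeff_zero {c : ℕ → ℝ} {p s : ℕ} (h : IsStabilityFunction c p s) :
    (Qpoly c s).coeff 0 = 0 := by
  rw [Qpoly, coeff_sub, Polynomial.mul_coeff_zero, Pgen_coeff h, Pgen_coeff h]
  simp [h.low 0 (Nat.zero_le p)]

lemma Ecorr_eq_zero_of_le {c : ℕ → ℝ} {p s : ℕ} (h : IsStabilityFunction c p s)
    {k : ℕ} (hk : k ≤ p) : Ecorr c k = 0 := by
  refine Finset.sum_eq_zero fun m hm => ?_
  have hm' : m ≤ k := Nat.lt_succ_iff.mp (Finset.mem_range.mp hm)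
  rw [h.low m (hm'.trans hk), h.low (k - m) ((Nat.sub_le k m).trans hk)]
  simp

lemma Ecorr_odd {c : ℕ → ℝ} {p s : ℕ} (h : IsStabilityFunction c p s) {t : ℕ}
    (hp : p = 2*t+1) :
    Ecorr c (p+1) = ((2 * (c (p+1) - 1) * (-1:ℝ)^(t+1) / ((p+1).factorial : ℝ) : ℝ) : ℂ) := by
  have h0k : (0:ℕ) ≠ p+1 := by omega
  have hsub : ({0, p+1} : Finset ℕ) ⊆ Finset.range (p+1+1) := by
    intro x hx
    simp only [Finset.mem_insert, Finset.mem_singleton] at hx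
    rcases hx with rfl | rfl <;> simp
  have key : Ecorr c (p+1) = ∑ m ∈ ({0, p+1} : Finset ℕ),
      ((c m : ℂ) * (c (p+1-m) : ℂ) - 1) * (I ^ m * (-I) ^ (p+1-m)) /
        ((m.factorial : ℂ) * ((p+1-m).factorial : ℂ)) := by
    rw [Ecorr]
    refine (Finset.sum_subset hsub fun m hm hnot => ?_).symm
    simp only [Finset.mem_insert, Finset.mem_singleton, not_or] at hnot
    have hm' : m ≤ p+1 := Nat.lt_succ_iff.mp (Finset.mem_range.mp hm)
    have h1 : m ≤ p := by omega
    have h2 : p+1-m ≤ p := by omega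
    rw [h.low m h1, h.low _ h2]
    simp
  rw [key, Finset.sum_pair h0k]
  have hI2 : (I:ℂ)^2 = -1 := Complex.I_sq
  have hnI2 : ((-I):ℂ)^2 = -1 := by rw [neg_pow]; simp [Complex.I_sq]
  have hIk : (I:ℂ)^(p+1) = (-1)^(t+1) := by
    rw [show p+1 = 2*(t+1) by omega, pow_mul, hI2]
  have hnIk : ((-I):ℂ)^(p+1) = (-1)^(t+1) := by
    rw [show p+1 = 2*(t+1) by omega, pow_mul, hnI2]
  simp only [Nat.sub_zero, Nat.sub_self, pow_zero, hIk, hnIk, Nat.factorial_zero]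
  rw [h.low 0 (Nat.zero_le p)]
  push_cast
  ring

lemma Ecorr_even_mid {c : ℕ → ℝ} {p s : ℕ} (h : IsStabilityFunction c p s) {t : ℕ}
    (hp : p = 2*t) : Ecorr c (p+1) = 0 := by
  have h0k : (0:ℕ) ≠ p+1 := by omega
  have hsub : ({0, p+1} : Finset ℕ) ⊆ Finset.range (p+1+1) := by
    intro x hx
    simp only [Finset.mem_insert, Finset.mem_singleton] at hx
    rcases hx with rfl | rfl <;> simp
  have key : Ecorr c (p+1) = ∑ m ∈ ({0, p+1} : Finset ℕ),
      ((c m : ℂ) * (c (p+1-m) : ℂ) - 1) * (I ^ m * (-I) ^ (p+1-m)) /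
        ((m.factorial : ℂ) * ((p+1-m).factorial : ℂ)) := by
    rw [Ecorr]
    refine (Finset.sum_subset hsub fun m hm hnot => ?_).symm
    simp only [Finset.mem_insert, Finset.mem_singleton, not_or] at hnot
    have hm' : m ≤ p+1 := Nat.lt_succ_iff.mp (Finset.mem_range.mp hm)
    have h1 : m ≤ p := by omega
    have h2 : p+1-m ≤ p := by omega
    rw [h.low m h1, h.low _ h2]
    simp
  rw [key, Finset.sum_pair h0k]
  have hodd : Odd (p+1) := ⟨t, by omega⟩
  have hnIk : ((-I):ℂ)^(p+1) = -(I^(p+1)) := Odd.neg_pow hodd I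
  simp only [Nat.sub_zero, Nat.sub_self, pow_zero, hnIk, Nat.factorial_zero]
  rw [h.low 0 (Nat.zero_le p)]
  ring

lemma Ecorr_even {c : ℕ → ℝ} {p s : ℕ} (h : IsStabilityFunction c p s) {t : ℕ}
    (hp : p = 2*t) (hpos : 0 < p) :
    Ecorr c (p+2) = ((2 * (c (p+2) - 1) * (-1:ℝ)^(t+1) / ((p+2).factorial : ℝ)
      + 2 * (c (p+1) - 1) * (-1:ℝ)^t / ((p+1).factorial : ℝ) : ℝ) : ℂ) := by
  have ht : 1 ≤ t := by omega
  have hsub : ({0, 1, p+1, p+2} : Finset ℕ) ⊆ Finset.range (p+2+1) := by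
    intro x hx
    simp only [Finset.mem_insert, Finset.mem_singleton] at hx
    rcases hx with rfl | rfl | rfl | rfl <;> simp
  have key : Ecorr c (p+2) = ∑ m ∈ ({0, 1, p+1, p+2} : Finset ℕ),
      ((c m : ℂ) * (c (p+2-m) : ℂ) - 1) * (I ^ m * (-I) ^ (p+2-m)) /
        ((m.factorial : ℂ) * ((p+2-m).factorial : ℂ)) := by
    rw [Ecorr]
    refine (Finset.sum_subset hsub fun m hm hnot => ?_).symm
    simp only [Finset.mem_insert, Finset.mem_singleton, not_or] at hnot
    have hm' : m ≤ p+2 := Nat.lt_succ_iff.mp (Finset.mem_range.mp hm)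
    have h1 : m ≤ p := by omega
    have h2 : p+2-m ≤ p := by omega
    rw [h.low m h1, h.low _ h2]
    simp
  rw [key]
  rw [Finset.sum_insert (by simp only [Finset.mem_insert, Finset.mem_singleton]; push_neg; omega), Finset.sum_insert (by simp only [Finset.mem_insert, Finset.mem_singleton]; push_neg; omega),
    Finset.sum_pair (show p+1 ≠ p+2 by omega)]
  have hI2 : (I:ℂ)^2 = -1 := Complex.I_sq
  have hnI2 : ((-I):ℂ)^2 = -1 := by rw [neg_pow]; simp [Complex.I_sq]
  have hIk : (I:ℂ)^(p+2) = (-1)^(t+1) := by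
    rw [show p+2 = 2*(t+1) by omega, pow_mul, hI2]
  have hnIk : ((-I):ℂ)^(p+2) = (-1)^(t+1) := by
    rw [show p+2 = 2*(t+1) by omega, pow_mul, hnI2]
  have hnIk1 : ((-I):ℂ)^(p+1) = (-1)^t * (-I) := by
    rw [show p+1 = 2*t+1 by omega, pow_succ, pow_mul, hnI2]
  have hIk1 : (I:ℂ)^(p+1) = (-1)^t * I := by
    rw [show p+1 = 2*t+1 by omega, pow_succ, pow_mul, hI2]
  simp only [show p+2-0 = p+2 from rfl, show p+2-1 = p+1 by omega,
    show p+2-(p+1) = 1 by omega, Nat.sub_self, pow_zero, pow_one, hIk, hnIk, hnIk1, hIk1,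
    Nat.factorial_zero, Nat.factorial_one]
  rw [h.low 0 (Nat.zero_le p), h.low 1 hpos]
  push_cast
  linear_combination (-(2*((c (p+1) : ℂ) - 1)*(-1:ℂ)^t / (((p+1).factorial : ℕ) : ℂ)))
    * Complex.I_mul_I


end Aux

/-- negativity of `γ_{p+1}` (odd `p`) resp. `δ_{p+1}` (even `p`) implies failure
of local stability on the imaginary axis. -/
theorem stmt7 (c : ℕ → ℝ) (p s : ℕ) (h : IsStabilityFunction c p s)
    (hcond :
      (Odd p ∧ (-1 : ℝ) ^ ((p + 1) / 2) * (1 - c (p + 1)) < 0) ∨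
      (Even p ∧ (-1 : ℝ) ^ (p / 2) * (c (p + 2) - (p + 2) * c (p + 1) + (p + 1)) < 0)) :
    ∀ Z > (0:ℝ), ∃ y : ℝ, 0 < |y| ∧ |y| ≤ Z ∧
      1 < ‖stabFun c s (Complex.I * (y:ℂ))‖ := by
  have main : ∃ N a, (0:ℝ) < a ∧ (∀ d < N, (Qpoly c s).coeff d = 0) ∧
      (Qpoly c s).coeff N = ((a:ℝ) : ℂ) := by
    rcases hcond with ⟨⟨t, ht⟩, hγ⟩ | ⟨⟨t, ht⟩, hδ⟩
    · -- odd case, p = 2t+1, N = p+1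
      have hp : p = 2*t+1 := by omega
      refine ⟨p+1, 2 * (c (p+1) - 1) * (-1:ℝ)^(t+1) / ((p+1).factorial : ℝ), ?_, ?_, ?_⟩
      · have hfp : (0:ℝ) < ((p+1).factorial : ℝ) := by positivity
        have hexp : (p+1)/2 = t+1 := by omega
        rw [hexp] at hγ
        apply div_pos ?_ hfp
        rcases Nat.even_or_odd (t+1) with he | ho
        · rw [he.neg_one_pow] at hγ ⊢; nlinarith
        · rw [ho.neg_one_pow] at hγ ⊢; nlinarith
      · intro d hd
        rcases Nat.eq_zero_or_pos d with rfl | hd0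
        · exact Qpoly_coeff_zero h
        · rw [Qpoly_coeff h d (by omega)]
          exact Ecorr_eq_zero_of_le h (by omega)
      · rw [Qpoly_coeff h (p+1) (by omega)]
        exact Ecorr_odd h hp
    · -- even case, p = 2t, N = p+2
      have hp : p = 2*t := by omega
      have hpos : 0 < p := h.pos
      refine ⟨p+2, 2 * (c (p+2) - 1) * (-1:ℝ)^(t+1) / ((p+2).factorial : ℝ)
        + 2 * (c (p+1) - 1) * (-1:ℝ)^t / ((p+1).factorial : ℝ), ?_, ?_, ?_⟩
      · have hexp : p/2 = t := by omega
        rw [hexp] at hδ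
        have hF : (0:ℝ) < ((p+1).factorial : ℝ) := by positivity
        have hfact : ((p+2).factorial : ℝ) = (p+2) * ((p+1).factorial : ℝ) := by
          rw [show p+2 = (p+1)+1 from rfl, Nat.factorial_succ]
          push_cast; ring
        have hkey : 2 * (c (p+2) - 1) * (-1:ℝ)^(t+1) / ((p+2).factorial : ℝ)
            + 2 * (c (p+1) - 1) * (-1:ℝ)^t / ((p+1).factorial : ℝ)
            = (-2 * ((-1:ℝ)^t * (c (p+2) - (p+2) * c (p+1) + (p+1))))
              / (((p+2):ℝ) * ((p+1).factorial : ℝ)) := by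
          rw [hfact, pow_succ]
          have hp2 : ((p:ℝ)+2) ≠ 0 := by positivity
          field_simp
          ring
        rw [hkey]
        apply div_pos (by nlinarith) (by positivity)
      · intro d hd
        rcases Nat.eq_zero_or_pos d with rfl | hd0
        · exact Qpoly_coeff_zero h
        · rcases Nat.lt_or_ge d (p+1) with hdp | hdp
          · rw [Qpoly_coeff h d (by omega)]
            exact Ecorr_eq_zero_of_le h (by omega)
          · have : d = p+1 := by omega
            subst this
            rw [Qpoly_coeff h (p+1) (by omega)]
            exact Ecorr_even_mid h hp
      · rw [Qpoly_coeff h (p+2) (by omega)]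
        exact Ecorr_even h hp hpos
  obtain ⟨N, a, hapos, hlow, hcN⟩ := main
  obtain ⟨Rq, hRq⟩ := Polynomial.X_pow_dvd_iff.mpr hlow
  have hR0 : Rq.eval 0 = ((a:ℝ) : ℂ) := by
    rw [← Polynomial.coeff_zero_eq_eval_zero, ← hcN, hRq]
    simpa using (Polynomial.coeff_X_pow_mul Rq N 0).symm
  set f : ℝ → ℝ := fun y => (Rq.eval ((y:ℝ) : ℂ)).re with hfdef
  have hf : Continuous f :=
    Complex.continuous_re.comp ((Rq.continuous).comp Complex.continuous_ofReal)
  have hf0 : f 0 = a := by simp [hfdef, hR0]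
  obtain ⟨η, hη, hball⟩ := Metric.continuousAt_iff.mp (hf.continuousAt (x := 0)) a hapos
  intro Z hZ
  set y := min Z (η/2) with hydef
  have hy0 : 0 < y := lt_min hZ (half_pos hη)
  have hyabs : |y| = y := abs_of_pos hy0
  have hyZ : y ≤ Z := min_le_left _ _
  have hyη : dist y 0 < η := by
    rw [Real.dist_eq, sub_zero, hyabs]
    calc y ≤ η/2 := min_le_right _ _
    _ < η := half_lt_self hη
  have hfy : 0 < f y := by
    have := hball hyη
    rw [Real.dist_eq, hf0] at this
    have := abs_lt.mp this
    linarith [this.1]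
  have heval2 : (Qpoly c s).eval ((y:ℝ) : ℂ) = ((y:ℝ):ℂ)^N * Rq.eval ((y:ℝ):ℂ) := by
    rw [hRq]; simp
  have hconj : stabFun c s (-Complex.I * ((y:ℝ):ℂ)) = (starRingEnd ℂ) (stabFun c s (Complex.I * ((y:ℝ):ℂ))) := by
    rw [stabFun_conj]
    congr 1
    simp [Complex.conj_ofReal]
  have heval : (Qpoly c s).eval ((y:ℝ):ℂ)
      = ((Complex.normSq (stabFun c s (Complex.I * ((y:ℝ):ℂ))) : ℝ) : ℂ) - 1 := by
    rw [Qpoly, Polynomial.eval_sub, Polynomial.eval_mul, Polynomial.eval_one,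
      Pgen_eval, Pgen_eval, hconj, Complex.mul_conj]
  have hns : Complex.normSq (stabFun c s (Complex.I * ((y:ℝ):ℂ))) - 1 = y^N * f y := by
    have hre := congrArg Complex.re (heval.symm.trans heval2)
    simp only [Complex.sub_re, Complex.ofReal_re, Complex.one_re, Complex.mul_re] at hre
    rw [← Complex.ofReal_pow] at hre
    simp only [Complex.ofReal_re, Complex.ofReal_im, mul_zero, sub_zero, zero_mul] at hre
    exact hre
  have hyN : 0 < y^N := pow_pos hy0 N
  refine ⟨y, by rw [hyabs]; exact hy0, by rw [hyabs]; exact hyZ, ?_⟩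
  by_contra hcon
  push_neg at hcon
  have hsq := Complex.sq_norm (stabFun c s (Complex.I * ((y:ℝ):ℂ)))
  have habsnn := norm_nonneg (stabFun c s (Complex.I * ((y:ℝ):ℂ)))
  nlinarith [mul_pos hyN hfy]
end
end

section
/- Let L ∈ ℂ^{n×n} be semi-dissipative. Then L has an eigenvalue on the imaginary axis (i.e., an eigenvalue with real part equal to zero) if and only if there exists a nonzero vector v ∈ ℂ^n which is an eigenvector of L_S and satisfies L_H v = 0. -/
open Matrix Polynomial
open scoped Matrix.Norms.L2Operator ComplexOrder

noncomputable section

/-- Conjugation identity for quadratic forms. -/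
lemma aux_conj_dot {n : ℕ} (M : Matrix (Fin n) (Fin n) ℂ) (v : Fin n → ℂ) :
    star v ⬝ᵥ Mᴴ *ᵥ v = star (star v ⬝ᵥ M *ᵥ v) := by
  rw [star_dotProduct]
  congr 1
  rw [star_mulVec, conjTranspose_conjTranspose, ← dotProduct_mulVec]

lemma aux_mem_spectrum {n : ℕ} (M : Matrix (Fin n) (Fin n) ℂ) (v : Fin n → ℂ) (hv : v ≠ 0)
    (μ : ℂ) (h : M *ᵥ v = μ • v) : μ ∈ spectrum ℂ M := by
  rw [spectrum.mem_iff]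
  intro hu
  rw [Matrix.isUnit_iff_isUnit_det] at hu
  have : ((algebraMap ℂ (Matrix (Fin n) (Fin n) ℂ)) μ - M).det = 0 := by
    rw [← Matrix.exists_mulVec_eq_zero_iff]
    exact ⟨v, hv, by simp [sub_mulVec, h, Algebra.algebraMap_eq_smul_one, smul_mulVec]⟩
  simp [this] at hu

lemma aux_exists_eigvec {n : ℕ} (M : Matrix (Fin n) (Fin n) ℂ) (μ : ℂ) (h : μ ∈ spectrum ℂ M) :
    ∃ v : Fin n → ℂ, v ≠ 0 ∧ M *ᵥ v = μ • v := by
  rw [spectrum.mem_iff, Matrix.isUnit_iff_isUnit_det, isUnit_iff_ne_zero, not_not,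
    ← Matrix.exists_mulVec_eq_zero_iff] at h
  obtain ⟨v, hv, h⟩ := h
  refine ⟨v, hv, ?_⟩
  rw [sub_mulVec, sub_eq_zero] at h
  simpa [Algebra.algebraMap_eq_smul_one, smul_mulVec] using h.symm

lemma aux_herm_add_skew {n : ℕ} (L : Matrix (Fin n) (Fin n) ℂ) :
    hermPart L + skewPart L = L := by
  unfold hermPart skewPart
  module

lemma aux_dot_self_star {n : ℕ} (v : Fin n → ℂ) :
    star (star v ⬝ᵥ v) = star v ⬝ᵥ v := (star_dotProduct v v).symm

/-- a semi-dissipative matrix has a purely imaginary eigenvalue iff some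
eigenvector of `L_S` lies in the kernel of `L_H`. -/
theorem stmt10 {n : ℕ} (L : Matrix (Fin n) (Fin n) ℂ) (hsd : IsSemiDissipative L) :
    (∃ μ ∈ spectrum ℂ L, μ.re = 0) ↔
      ∃ v : Fin n → ℂ, v ≠ 0 ∧ (∃ μ : ℂ, skewPart L *ᵥ v = μ • v) ∧
        hermPart L *ᵥ v = 0 := by
  constructor
  · rintro ⟨μ, hμ, hre⟩
    obtain ⟨v, hv, hLv⟩ := aux_exists_eigvec L μ hμ
    -- the quadratic form of the Hermitian part vanishes at v
    have hd : star v ⬝ᵥ L *ᵥ v = μ * (star v ⬝ᵥ v) := by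
      rw [hLv, dotProduct_smul, smul_eq_mul]
    have hconjμ : star μ = -μ := by
      simp [Complex.ext_iff, hre]
    have hq : star v ⬝ᵥ hermPart L *ᵥ v = 0 := by
      unfold hermPart
      rw [smul_mulVec, dotProduct_smul, add_mulVec, dotProduct_add, aux_conj_dot, hd,
        star_mul', aux_dot_self_star, hconjμ]
      simp [smul_eq_mul]
    have hker : hermPart L *ᵥ v = 0 := by
      have := (hsd.dotProduct_mulVec_zero_iff v).mp ?_
      · have h2 : -(hermPart L *ᵥ v) = 0 := by rwa [← neg_mulVec]
        simpa using h2
      · rw [neg_mulVec, dotProduct_neg, hq, neg_zero]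
    refine ⟨v, hv, ⟨μ, ?_⟩, hker⟩
    have hLsplit : skewPart L *ᵥ v = L *ᵥ v - hermPart L *ᵥ v := by
      rw [eq_sub_iff_add_eq, ← add_mulVec, add_comm (skewPart L), aux_herm_add_skew]
    rw [hLsplit, hker, sub_zero, hLv]
  · rintro ⟨v, hv, ⟨μ, hskew⟩, hker⟩
    have hLv : L *ᵥ v = μ • v := by
      rw [← aux_herm_add_skew L, add_mulVec, hker, hskew, zero_add]
    refine ⟨μ, aux_mem_spectrum L v hv μ hLv, ?_⟩
    -- purely imaginary eigenvalue of the skew part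
    have hskewH : (skewPart L)ᴴ = -(skewPart L) := by
      unfold skewPart
      rw [conjTranspose_smul, conjTranspose_sub, conjTranspose_conjTranspose]
      simp [smul_sub]
    have hs : star v ⬝ᵥ skewPart L *ᵥ v = μ * (star v ⬝ᵥ v) := by
      rw [hskew, dotProduct_smul, smul_eq_mul]
    have h1 : star (μ * (star v ⬝ᵥ v)) = -(μ * (star v ⬝ᵥ v)) := by
      rw [← hs, ← aux_conj_dot, hskewH, neg_mulVec, dotProduct_neg, hs]
    have hsne : (star v ⬝ᵥ v) ≠ 0 := by
      rw [star_dotProduct, aux_dot_self_star]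
      simpa [dotProduct_star_self_eq_zero] using hv
    have h2 : (starRingEnd ℂ) μ * (star v ⬝ᵥ v) = -μ * (star v ⬝ᵥ v) := by
      rw [neg_mul, ← h1]
      simp [mul_comm, aux_dot_self_star]
    have h3 : (starRingEnd ℂ) μ = -μ := mul_right_cancel₀ hsne h2
    have := congrArg Complex.re h3
    simp at this
    linarith
end
end

section
/- Let L ∈ ℂ^{n×n} be semi-dissipative. Then there exist n₁, n₂ ∈ ℕ₀ with n₁ + n₂ = n, a unitary matrix V ∈ ℂ^{n×n}, and matrices L₁ ∈ ℂ^{n₁×n₁}, L₂ ∈ ℂ^{n₂×n₂} such that, after identifying ℂ^n with ℂ^{n₁} ⊕ ℂ^{n₂}, the matrix V L V* equals the block diagonal matrix diag(L₁, L₂) (with vanishing off-diagonal blocks), where L₁ is semi-dissipative and asymptotically stable, and L₂ is skew-Hermitian (L₂* = −L₂). -/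
open Matrix Polynomial
open scoped Matrix.Norms.L2Operator ComplexOrder

noncomputable section

lemma auxTransRfl {a b : ℕ} :
    (finSumFinEquiv : Fin a ⊕ Fin b ≃ Fin (a + b)).trans (finCongr rfl) = finSumFinEquiv :=
  Equiv.ext fun x => by simp

lemma auxStarReindex {m n : Type*} [Fintype m] [DecidableEq m]
    (e : m ≃ n) (M : Matrix m m ℂ) :
    (Matrix.reindex e e M)ᴴ = Matrix.reindex e e Mᴴ := by
  simp [Matrix.reindex_apply, Matrix.conjTranspose_submatrix]


/-! ### Auxiliary lemmas for `stmt11` -/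

lemma auxDotConj {n : ℕ} (A : Matrix (Fin n) (Fin n) ℂ) (x y : Fin n → ℂ) :
    star x ⬝ᵥ (A *ᵥ y) = star (star y ⬝ᵥ (Aᴴ *ᵥ x)) := by
  simp only [dotProduct, mulVec, dotProduct, conjTranspose_apply,
    Pi.star_apply, star_sum, star_mul', star_star, Finset.mul_sum]
  rw [Finset.sum_comm]
  refine Finset.sum_congr rfl fun i _ => Finset.sum_congr rfl fun j _ => by ring

lemma auxEig {n : ℕ} (L : Matrix (Fin n) (Fin n) ℂ) (μ : ℂ) (h : μ ∈ spectrum ℂ L) :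
    ∃ v : Fin n → ℂ, v ≠ 0 ∧ L *ᵥ v = μ • v := by
  rw [spectrum.mem_iff] at h
  have hdet : (μ • (1 : Matrix (Fin n) (Fin n) ℂ) - L).det = 0 := by
    by_contra hd
    exact h (by
      have : IsUnit (μ • (1 : Matrix (Fin n) (Fin n) ℂ) - L) :=
        (Matrix.isUnit_iff_isUnit_det _).mpr (isUnit_iff_ne_zero.mpr hd)
      simpa [Algebra.algebraMap_eq_smul_one] using this)
  obtain ⟨v, hv0, hv⟩ := (Matrix.exists_mulVec_eq_zero_iff).mpr hdet
  refine ⟨v, hv0, ?_⟩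
  have := hv
  rw [sub_mulVec, smul_mulVec, one_mulVec, sub_eq_zero] at this
  rw [← this]

lemma auxKey {n : ℕ} (L : Matrix (Fin n) (Fin n) ℂ) (hsd : IsSemiDissipative L)
    {v : Fin n → ℂ} (hv0 : v ≠ 0) {μ : ℂ} (hv : L *ᵥ v = μ • v) :
    μ.re ≤ 0 ∧ (μ.re = 0 → Lᴴ *ᵥ v = (-μ) • v) := by
  set c : ℂ := star v ⬝ᵥ v with hc
  have hcr : c = ((∑ i, Complex.normSq (v i) : ℝ) : ℂ) := by
    simp [hc, dotProduct, Complex.normSq_eq_conj_mul_self]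
  have hrpos : 0 < ∑ i, Complex.normSq (v i) := by
    obtain ⟨i, hi⟩ := Function.ne_iff.mp hv0
    exact Finset.sum_pos' (fun i _ => Complex.normSq_nonneg _)
      ⟨i, Finset.mem_univ _, Complex.normSq_pos.mpr hi⟩
  have hz : star v ⬝ᵥ (L *ᵥ v) = μ * c := by
    rw [hv]; simp [dotProduct_smul, hc, smul_eq_mul]
  have hzc : star v ⬝ᵥ (Lᴴ *ᵥ v) = starRingEnd ℂ (μ * c) := by
    rw [← hz]
    simp only [dotProduct, mulVec, dotProduct, conjTranspose_apply,
      Pi.star_apply, starRingEnd_apply, star_sum, star_mul', star_star,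
      Finset.mul_sum]
    rw [Finset.sum_comm]
    refine Finset.sum_congr rfl fun i _ => ?_
    refine Finset.sum_congr rfl fun j _ => ?_
    ring
  have hherm : star v ⬝ᵥ (hermPart L *ᵥ v) = ((μ * c).re : ℂ) := by
    rw [hermPart, smul_mulVec, add_mulVec, dotProduct_smul, dotProduct_add, hz, hzc]
    rw [smul_eq_mul, Complex.add_conj]
    push_cast
    ring
  have hneg := hsd.dotProduct_mulVec_nonneg v
  rw [neg_mulVec, dotProduct_neg, hherm] at hneg
  have hre : (μ * c).re ≤ 0 := by
    rw [← Complex.ofReal_neg, Complex.zero_le_real] at hneg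
    linarith
  have hmc : (μ * c).re = μ.re * (∑ i, Complex.normSq (v i)) := by
    rw [hcr]; simp [Complex.mul_re]
  have h1 : μ.re ≤ 0 := by
    by_contra h
    push_neg at h
    nlinarith [hmc, hre]
  refine ⟨h1, fun h0 => ?_⟩
  have hzero : star v ⬝ᵥ ((-(hermPart L)) *ᵥ v) = 0 := by
    rw [neg_mulVec, dotProduct_neg, hherm, hmc, h0]
    simp
  have := (hsd.dotProduct_mulVec_zero_iff v).mp hzero
  rw [neg_mulVec, neg_eq_zero] at this
  have hsum : (L + Lᴴ) *ᵥ v = 0 := by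
    have h2 : (2:ℂ) • (hermPart L *ᵥ v) = (L + Lᴴ) *ᵥ v := by
      rw [hermPart, smul_mulVec, smul_smul]
      norm_num
    rw [← h2, this, smul_zero]
  rw [add_mulVec, hv] at hsum
  have : Lᴴ *ᵥ v = -(μ • v) := by linear_combination (norm := module) hsum
  rw [this, neg_smul]

lemma auxDeflate {m : ℕ} (L : Matrix (Fin (m+1)) (Fin (m+1)) ℂ) {v : Fin (m+1) → ℂ} {μ : ℂ}
    (hv1 : star v ⬝ᵥ v = 1) (hL : L *ᵥ v = μ • v) (hLH : Lᴴ *ᵥ v = (-μ) • v)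
    (hμ : starRingEnd ℂ μ = -μ) :
    ∃ (U : Matrix (Fin (m+1)) (Fin (m+1)) ℂ) (L' : Matrix (Fin m) (Fin m) ℂ),
      U ∈ Matrix.unitaryGroup (Fin (m+1)) ℂ ∧
      U * L * Uᴴ = Matrix.reindex finSumFinEquiv finSumFinEquiv
        (Matrix.fromBlocks L' 0 0 (Matrix.of fun _ _ : Fin 1 => μ)) := by
  classical
  set E := EuclideanSpace ℂ (Fin (m+1))
  let w : E := WithLp.toLp 2 v
  have hmem : Orthonormal ℂ (Set.restrict {Fin.last m} (fun _ : Fin (m+1) => w)) := by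
    rw [orthonormal_iff_ite]
    intro i j
    have : i = j := Subsingleton.elim i j
    subst this
    simp only [if_pos rfl, Set.restrict_apply]
    calc (inner ℂ (w) (w) : ℂ) = ∑ k, starRingEnd ℂ (v k) * v k :=
          (PiLp.inner_apply _ _).trans (Finset.sum_congr rfl fun k _ => by rw [RCLike.inner_apply'])
      _ = star v ⬝ᵥ v := rfl
      _ = 1 := hv1
  obtain ⟨b, hb⟩ := Orthonormal.exists_orthonormalBasis_extension_of_card_eq
    (by simp [E]) hmem
  have hbv : b (Fin.last m) = w := hb _ rfl
  set U : Matrix (Fin (m+1)) (Fin (m+1)) ℂ := Matrix.of fun i j => star (b i j) with hU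
  have hinner : ∀ i j, star (b i : Fin (m+1) → ℂ) ⬝ᵥ (b j : Fin (m+1) → ℂ)
      = if i = j then 1 else 0 := by
    intro i j
    have h1 : (inner ℂ (b i) (b j) : ℂ) = if i = j then 1 else 0 :=
      orthonormal_iff_ite.mp b.orthonormal i j
    rw [← h1, PiLp.inner_apply]
    exact Finset.sum_congr rfl fun k _ => by rw [RCLike.inner_apply']; rfl
  have hUmem : U ∈ Matrix.unitaryGroup (Fin (m+1)) ℂ := by
    rw [Matrix.mem_unitaryGroup_iff]
    ext i j
    simp only [Matrix.mul_apply, star_eq_conjTranspose, conjTranspose_apply, hU,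
      Matrix.of_apply, star_star]
    calc ∑ k, star (b i k) * b j k = star (b i : Fin (m+1) → ℂ) ⬝ᵥ (b j : Fin (m+1) → ℂ) := rfl
      _ = if i = j then 1 else 0 := hinner i j
      _ = (1 : Matrix (Fin (m+1)) (Fin (m+1)) ℂ) i j := by simp [Matrix.one_apply]
  have hentry : ∀ i j, (U * L * Uᴴ) i j
      = star (b i : Fin (m+1) → ℂ) ⬝ᵥ (L *ᵥ (b j : Fin (m+1) → ℂ)) := by
    intro i j
    simp only [Matrix.mul_apply, conjTranspose_apply, hU, Matrix.of_apply, star_star,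
      dotProduct, mulVec, Finset.sum_mul, Finset.mul_sum]
    rw [Finset.sum_comm]
    refine Finset.sum_congr rfl fun k _ => Finset.sum_congr rfl fun l _ => ?_
    simp only [Pi.star_apply]
    ring
  have hcol : ∀ i, (U * L * Uᴴ) i (Fin.last m) = if i = Fin.last m then μ else 0 := by
    intro i
    rw [hentry, hbv]
    show star (b i : Fin (m+1) → ℂ) ⬝ᵥ (L *ᵥ v) = _
    rw [hL, dotProduct_smul, smul_eq_mul]
    have := hinner i (Fin.last m)
    rw [hbv] at this
    rw [show (star (b i : Fin (m+1) → ℂ) ⬝ᵥ (w : Fin (m+1) → ℂ))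
        = if i = Fin.last m then 1 else 0 from this]
    split <;> simp
  have hrow : ∀ j, (U * L * Uᴴ) (Fin.last m) j = if j = Fin.last m then μ else 0 := by
    intro j
    rw [hentry, hbv]
    show star (v : Fin (m+1) → ℂ) ⬝ᵥ (L *ᵥ (b j : Fin (m+1) → ℂ)) = _
    rw [auxDotConj, hLH, dotProduct_smul, smul_eq_mul, star_mul']
    have := hinner j (Fin.last m)
    rw [hbv] at this
    rw [show (star (b j : Fin (m+1) → ℂ) ⬝ᵥ (w : Fin (m+1) → ℂ))
        = if j = Fin.last m then 1 else 0 from this, star_neg,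
      show (star μ : ℂ) = -μ from hμ]
    split <;> simp
  refine ⟨U, Matrix.of fun i j => (U * L * Uᴴ) (Fin.castSucc i) (Fin.castSucc j), hUmem, ?_⟩
  ext i j
  simp only [Matrix.reindex_apply, Matrix.submatrix_apply]
  refine Fin.lastCases ?_ (fun i' => ?_) i <;> refine Fin.lastCases ?_ (fun j' => ?_) j
  · rw [finSumFinEquiv_symm_last]
    simpa using hrow (Fin.last m)
  · rw [finSumFinEquiv_symm_last,
      show Fin.castSucc j' = Fin.castAdd 1 j' from rfl, finSumFinEquiv_symm_apply_castAdd]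
    have h0 := hrow (Fin.castSucc j')
    rw [if_neg (Fin.castSucc_lt_last j').ne] at h0
    exact h0
  · rw [show Fin.castSucc i' = Fin.castAdd 1 i' from rfl, finSumFinEquiv_symm_apply_castAdd,
      finSumFinEquiv_symm_last]
    have h0 := hcol (Fin.castSucc i')
    rw [if_neg (Fin.castSucc_lt_last i').ne] at h0
    exact h0
  · rw [show Fin.castSucc i' = Fin.castAdd 1 i' from rfl,
      show Fin.castSucc j' = Fin.castAdd 1 j' from rfl,
      finSumFinEquiv_symm_apply_castAdd, finSumFinEquiv_symm_apply_castAdd]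
    rfl

lemma auxReindexMul {m n : Type*} [Fintype m] [Fintype n] [DecidableEq m] [DecidableEq n]
    (e : m ≃ n) (M N : Matrix m m ℂ) :
    Matrix.reindex e e M * Matrix.reindex e e N = Matrix.reindex e e (M * N) := by
  simpa using (map_mul (Matrix.reindexAlgEquiv ℂ ℂ e) M N).symm

lemma auxHermConj {n : ℕ} (U L : Matrix (Fin n) (Fin n) ℂ) :
    hermPart (U * L * Uᴴ) = U * hermPart L * Uᴴ := by
  simp only [hermPart, Matrix.conjTranspose_mul, Matrix.conjTranspose_conjTranspose]
  rw [Matrix.mul_smul, Matrix.smul_mul]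
  congr 1
  noncomm_ring

lemma auxTransfer {n m k : ℕ} {U L : Matrix (Fin n) (Fin n) ℂ}
    {L' : Matrix (Fin m) (Fin m) ℂ} {D : Matrix (Fin k) (Fin k) ℂ}
    (e : Fin m ⊕ Fin k ≃ Fin n)
    (hblk : U * L * Uᴴ = Matrix.reindex e e (Matrix.fromBlocks L' 0 0 D))
    (hsd : IsSemiDissipative L) : IsSemiDissipative L' := by
  have h1 : (-(hermPart (U * L * Uᴴ))).PosSemidef := by
    have heq : -(hermPart (U * L * Uᴴ)) = U * (-(hermPart L)) * Uᴴ := by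
      rw [auxHermConj]
      simp [Matrix.mul_neg, Matrix.neg_mul]
    rw [heq]
    exact hsd.mul_mul_conjTranspose_same U
  have h2 : -(hermPart L') = (-(hermPart (U * L * Uᴴ))).submatrix
      (fun i : Fin m => e (Sum.inl i)) (fun i : Fin m => e (Sum.inl i)) := by
    ext i j
    simp only [Matrix.neg_apply, Matrix.submatrix_apply, hermPart, Matrix.smul_apply,
      Matrix.add_apply, Matrix.conjTranspose_apply, hblk, Matrix.reindex_apply,
      Matrix.submatrix_apply, Equiv.symm_apply_apply, Matrix.fromBlocks_apply₁₁, smul_eq_mul]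
  rw [IsSemiDissipative, h2]
  exact h1.submatrix _

lemma auxSymmCastSucc {k : ℕ} (c : Fin k) :
    finSumFinEquiv.symm (Fin.castSucc c) = (Sum.inl c : Fin k ⊕ Fin 1) := by
  rw [show Fin.castSucc c = Fin.castAdd 1 c from rfl, finSumFinEquiv_symm_apply_castAdd]

lemma auxGlue {n m n₁ n₂ : ℕ} (h1 : m + 1 = n) (h2 : n₁ + n₂ = m) (h : n₁ + (n₂ + 1) = n)
    (A : Matrix (Fin n₁) (Fin n₁) ℂ) (B : Matrix (Fin n₂) (Fin n₂) ℂ)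
    (C : Matrix (Fin 1) (Fin 1) ℂ) :
    Matrix.reindex (finSumFinEquiv.trans (finCongr h1)) (finSumFinEquiv.trans (finCongr h1))
      (Matrix.fromBlocks
        (Matrix.reindex (finSumFinEquiv.trans (finCongr h2)) (finSumFinEquiv.trans (finCongr h2))
          (Matrix.fromBlocks A 0 0 B)) 0 0 C)
    = Matrix.reindex (finSumFinEquiv.trans (finCongr h)) (finSumFinEquiv.trans (finCongr h))
        (Matrix.fromBlocks A 0 0
          (Matrix.reindex finSumFinEquiv finSumFinEquiv (Matrix.fromBlocks B 0 0 C))) := by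
  set e₁ : Fin m ⊕ Fin 1 ≃ Fin n := finSumFinEquiv.trans (finCongr h1) with he₁
  set e₂ : Fin n₁ ⊕ Fin n₂ ≃ Fin m := finSumFinEquiv.trans (finCongr h2) with he₂
  set e : Fin n₁ ⊕ Fin (n₂ + 1) ≃ Fin n := finSumFinEquiv.trans (finCongr h) with he
  have f1 : ∀ a : Fin n₁, e₁.symm (e (Sum.inl a)) = Sum.inl (e₂ (Sum.inl a)) := by
    intro a
    rw [Equiv.symm_apply_eq]
    apply Fin.ext
    simp [he, he₁, he₂, Equiv.trans_apply, finSumFinEquiv_apply_left]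
  have f2 : ∀ c : Fin n₂, e₁.symm (e (Sum.inr (Fin.castSucc c))) = Sum.inl (e₂ (Sum.inr c)) := by
    intro c
    rw [Equiv.symm_apply_eq]
    apply Fin.ext
    simp [he, he₁, he₂, Equiv.trans_apply, finSumFinEquiv_apply_left,
      finSumFinEquiv_apply_right]
  have f3 : e₁.symm (e (Sum.inr (Fin.last n₂))) = Sum.inr (0 : Fin 1) := by
    rw [Equiv.symm_apply_eq]
    apply Fin.ext
    simp [he, he₁, Equiv.trans_apply, finSumFinEquiv_apply_right]
    omega
  ext i j
  obtain ⟨x, rfl⟩ := e.surjective i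
  obtain ⟨y, rfl⟩ := e.surjective j
  simp only [Matrix.reindex_apply, Matrix.submatrix_apply, Equiv.symm_apply_apply]
  rcases x with a | b
  · rcases y with a' | b'
    · rw [f1 a, f1 a']
      simp
    · refine Fin.lastCases ?_ (fun c' => ?_) b' <;>
        simp [f1, f2, f3, finSumFinEquiv_symm_last, auxSymmCastSucc]
  · rcases y with a' | b'
    · refine Fin.lastCases ?_ (fun c => ?_) b <;>
        simp [f1, f2, f3, finSumFinEquiv_symm_last, auxSymmCastSucc]
    · refine Fin.lastCases ?_ (fun c => ?_) b <;> refine Fin.lastCases ?_ (fun c' => ?_) b' <;>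
        simp [f1, f2, f3, finSumFinEquiv_symm_last, auxSymmCastSucc]

lemma auxSub {a b n : ℕ} (h : a + b = n) (M : Matrix (Fin a ⊕ Fin b) (Fin a ⊕ Fin b) ℂ) :
    M.submatrix (fun i => finSumFinEquiv.symm (Fin.cast h.symm i))
      (fun j => finSumFinEquiv.symm (Fin.cast h.symm j))
    = Matrix.reindex (finSumFinEquiv.trans (finCongr h)) (finSumFinEquiv.trans (finCongr h)) M :=
  rfl


/-- unitary block diagonalization of a semi-dissipative matrix into an
asymptotically stable semi-dissipative block and a skew-Hermitian block. -/
theorem stmt11 {n : ℕ} (L : Matrix (Fin n) (Fin n) ℂ) (hsd : IsSemiDissipative L) :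
    ∃ (n₁ n₂ : ℕ) (h : n₁ + n₂ = n) (V : Matrix (Fin n) (Fin n) ℂ)
      (L₁ : Matrix (Fin n₁) (Fin n₁) ℂ) (L₂ : Matrix (Fin n₂) (Fin n₂) ℂ),
      V ∈ Matrix.unitaryGroup (Fin n) ℂ ∧
      V * L * Vᴴ = (Matrix.fromBlocks L₁ 0 0 L₂).submatrix
          (fun i => finSumFinEquiv.symm (Fin.cast h.symm i))
          (fun j => finSumFinEquiv.symm (Fin.cast h.symm j)) ∧
      IsSemiDissipative L₁ ∧ IsAsympStable L₁ ∧ L₂ᴴ = -L₂ := by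
  induction n using Nat.strong_induction_on with
  | _ n IH =>
  by_cases hstab : IsAsympStable L
  · have hsymm : ∀ i : Fin n,
        (finSumFinEquiv.trans (finCongr (rfl : n + 0 = n))).symm i
          = (Sum.inl i : Fin n ⊕ Fin 0) := by
      intro i
      rw [Equiv.symm_apply_eq]
      rfl
    have hbase : (1 : Matrix (Fin n) (Fin n) ℂ) * L * (1 : Matrix (Fin n) (Fin n) ℂ)ᴴ
        = (Matrix.fromBlocks L 0 0 (0 : Matrix (Fin 0) (Fin 0) ℂ)).submatrix
          (fun i => finSumFinEquiv.symm (Fin.cast (rfl : n + 0 = n).symm i))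
          (fun j => finSumFinEquiv.symm (Fin.cast (rfl : n + 0 = n).symm j)) := by
      rw [auxSub (rfl : n + 0 = n)]
      ext i j
      rw [Matrix.reindex_apply, Matrix.submatrix_apply, hsymm i, hsymm j,
        Matrix.fromBlocks_apply₁₁]
      simp
    have hzskew : (0 : Matrix (Fin 0) (Fin 0) ℂ)ᴴ = -(0 : Matrix (Fin 0) (Fin 0) ℂ) := by
      ext i j
      exact i.elim0
    exact ⟨n, 0, rfl, 1, L, 0, Submonoid.one_mem _, hbase, hsd, hstab, hzskew⟩
  · -- there is an eigenvalue with re = 0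
    simp only [IsAsympStable, not_forall, not_lt] at hstab
    obtain ⟨μ, hμspec, hμre⟩ := hstab
    obtain ⟨v, hv0, hveq⟩ := auxEig L μ hμspec
    obtain ⟨hle, himp⟩ := auxKey L hsd hv0 hveq
    have hre0 : μ.re = 0 := le_antisymm hle hμre
    have hLHv := himp hre0
    have hμc : starRingEnd ℂ μ = -μ := by
      apply Complex.ext <;> simp [hre0]
    -- n = m + 1
    obtain ⟨i0, hi0⟩ := Function.ne_iff.mp hv0
    obtain ⟨m, rfl⟩ := Nat.exists_eq_succ_of_ne_zero (Nat.pos_iff_ne_zero.mp i0.pos)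
    -- normalize the eigenvector
    set r : ℝ := ∑ i, Complex.normSq (v i) with hr
    have hrpos : 0 < r :=
      Finset.sum_pos' (fun i _ => Complex.normSq_nonneg _)
        ⟨i0, Finset.mem_univ _, Complex.normSq_pos.mpr hi0⟩
    set s : ℝ := (Real.sqrt r)⁻¹ with hs
    set w : Fin (m+1) → ℂ := (s : ℂ) • v with hw
    have hvv : star v ⬝ᵥ v = (r : ℂ) := by
      simp [hr, dotProduct, Complex.normSq_eq_conj_mul_self]
    have hw1 : star w ⬝ᵥ w = 1 := by
      rw [hw, star_smul, smul_dotProduct, dotProduct_smul, hvv]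
      simp only [star_trivial, smul_eq_mul, Complex.star_def, Complex.conj_ofReal]
      rw [← Complex.ofReal_mul, ← Complex.ofReal_mul]
      norm_cast
      rw [hs]
      rw [← Real.sqrt_inv]
      rw [← Real.sqrt_mul_self (by positivity : (0:ℝ) ≤ r⁻¹)] at *
      field_simp
      rw [Real.sq_sqrt (by positivity), one_div, Real.sqrt_inv, Real.sqrt_sq hrpos.le]
      field_simp
    have hLw : L *ᵥ w = μ • w := by
      rw [hw, mulVec_smul, hveq, smul_comm]
    have hLHw : Lᴴ *ᵥ w = (-μ) • w := by
      rw [hw, mulVec_smul, hLHv, smul_comm]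
    obtain ⟨U, L', hUmem, hblk⟩ := auxDeflate L hw1 hLw hLHw hμc
    have hsd' : IsSemiDissipative L' := auxTransfer finSumFinEquiv hblk hsd
    obtain ⟨n₁, n₂, h₂, V', L₁, L₂', hV', hblk', hsd₁, hstab₁, hskew'⟩ :=
      IH m (Nat.lt_succ_self m) L' hsd'
    rw [auxSub h₂] at hblk'
    have h : n₁ + (n₂ + 1) = m + 1 := by omega
    set D : Matrix (Fin 1) (Fin 1) ℂ := Matrix.of fun _ _ => μ with hD
    set L₂ : Matrix (Fin (n₂+1)) (Fin (n₂+1)) ℂ :=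
      Matrix.reindex finSumFinEquiv finSumFinEquiv (Matrix.fromBlocks L₂' 0 0 D) with hL₂
    set W : Matrix (Fin (m+1)) (Fin (m+1)) ℂ :=
      Matrix.reindex finSumFinEquiv finSumFinEquiv
        (Matrix.fromBlocks V' 0 0 (1 : Matrix (Fin 1) (Fin 1) ℂ)) with hW
    have hWmem : W ∈ Matrix.unitaryGroup (Fin (m+1)) ℂ := by
      rw [Matrix.mem_unitaryGroup_iff]
      rw [hW, Matrix.star_eq_conjTranspose, auxStarReindex, auxReindexMul,
        Matrix.fromBlocks_conjTranspose, Matrix.fromBlocks_multiply]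
      have hVV : V' * V'ᴴ = 1 := by
        have := Matrix.mem_unitaryGroup_iff.mp hV'
        rwa [Matrix.star_eq_conjTranspose] at this
      simp [hVV, Matrix.fromBlocks_one]
    refine ⟨n₁, n₂ + 1, h, W * U, L₁, L₂, Submonoid.mul_mem _ hWmem hUmem, ?_, hsd₁, hstab₁, ?_⟩
    · rw [auxSub h]
      have hcalc : (W * U) * L * (W * U)ᴴ = W * (U * L * Uᴴ) * Wᴴ := by
        rw [Matrix.conjTranspose_mul]
        noncomm_ring
      rw [hcalc, hblk, hW, auxStarReindex, auxReindexMul, auxReindexMul,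
        Matrix.fromBlocks_conjTranspose, Matrix.fromBlocks_multiply, Matrix.fromBlocks_multiply]
      simp only [Matrix.mul_zero, Matrix.zero_mul, Matrix.mul_one, Matrix.one_mul,
        add_zero, zero_add, Matrix.zero_mul, Matrix.conjTranspose_one,
        Matrix.conjTranspose_zero]
      rw [hblk']
      have hg := auxGlue (rfl : m + 1 = m + 1) h₂ h L₁ L₂' D
      rw [auxTransRfl] at hg
      rw [hg, hL₂]
    · rw [hL₂, auxStarReindex, Matrix.fromBlocks_conjTranspose]
      have hD' : Dᴴ = -D := by
        ext i j
        simp [hD, Matrix.conjTranspose_apply, hμc]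
      rw [hskew', hD']
      ext i j
      simp only [Matrix.reindex_apply, Matrix.submatrix_apply, Matrix.neg_apply]
      rcases finSumFinEquiv.symm i with a | a <;> rcases finSumFinEquiv.symm j with b | b <;>
        simp [Matrix.fromBlocks]
end
end

section
/- Let L ∈ ℂ^{n×n} be semi-dissipative with hypocoercivity index m ≥ 1, i.e., T_m := Σ_{j=0}^m L_S^j L_H (L_S*)^j is negative definite and T_{m−1} is not negative definite. Then there exists a vector u₀ ∈ ℂ^n with ‖u₀‖ = 1 such that L_H (L_S)^j u₀ = 0 for all 0 ≤ j ≤ m−1 and L_H (L_S)^m u₀ ≠ 0. -/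
open Matrix Polynomial
open scoped Matrix.Norms.L2Operator ComplexOrder

noncomputable section

lemma hermPart_isHermitian {n : ℕ} (L : Matrix (Fin n) (Fin n) ℂ) :
    (hermPart L).IsHermitian := by
  simp [hermPart, Matrix.IsHermitian, conjTranspose_smul, conjTranspose_add, add_comm,
    Complex.star_def]

lemma skewPart_conjTranspose {n : ℕ} (L : Matrix (Fin n) (Fin n) ℂ) :
    (skewPart L)ᴴ = -(skewPart L) := by
  simp [skewPart, conjTranspose_smul, conjTranspose_sub, Complex.star_def, smul_sub]

lemma conj_quad {n : ℕ} (A B : Matrix (Fin n) (Fin n) ℂ) (x : Fin n → ℂ) :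
    star x ⬝ᵥ ((A * B * Aᴴ) *ᵥ x) = star (Aᴴ *ᵥ x) ⬝ᵥ (B *ᵥ (Aᴴ *ᵥ x)) := by
  rw [star_mulVec, conjTranspose_conjTranspose, ← mulVec_mulVec, ← mulVec_mulVec,
    dotProduct_mulVec (star x)]

lemma negTmat_isHermitian {n : ℕ} (L : Matrix (Fin n) (Fin n) ℂ) (k : ℕ) :
    (-(Tmat L k)).IsHermitian := by
  refine IsHermitian.neg ?_
  unfold Tmat
  show _ = _
  rw [conjTranspose_sum]
  refine Finset.sum_congr rfl fun j _ => ?_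
  rw [← conjTranspose_pow]
  exact (isHermitian_mul_mul_conjTranspose _ (hermPart_isHermitian L)).eq

lemma sum_mulVec' {n : ℕ} {ι : Type*} (s : Finset ι) (M : ι → Matrix (Fin n) (Fin n) ℂ)
    (x : Fin n → ℂ) : (∑ j ∈ s, M j) *ᵥ x = ∑ j ∈ s, (M j *ᵥ x) := by
  ext i
  simp only [mulVec, dotProduct, Finset.sum_apply, Matrix.sum_apply, Finset.sum_mul]
  rw [Finset.sum_comm]

lemma dotProduct_sum' {n : ℕ} {ι : Type*} (s : Finset ι) (v : Fin n → ℂ)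
    (w : ι → Fin n → ℂ) : v ⬝ᵥ (∑ j ∈ s, w j) = ∑ j ∈ s, v ⬝ᵥ w j := by
  simp only [dotProduct, Finset.sum_apply, Finset.mul_sum]
  rw [Finset.sum_comm]

lemma negTmat_quad {n : ℕ} (L : Matrix (Fin n) (Fin n) ℂ) (k : ℕ) (x : Fin n → ℂ) :
    star x ⬝ᵥ ((-(Tmat L k)) *ᵥ x) =
      ∑ j ∈ Finset.range (k + 1),
        star (((skewPart L)ᴴ) ^ j *ᵥ x) ⬝ᵥ
          ((-(hermPart L)) *ᵥ (((skewPart L)ᴴ) ^ j *ᵥ x)) := by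
  rw [neg_mulVec, dotProduct_neg]
  unfold Tmat
  rw [sum_mulVec', dotProduct_sum', ← Finset.sum_neg_distrib]
  refine Finset.sum_congr rfl fun j _ => ?_
  rw [← conjTranspose_pow, conj_quad, neg_mulVec, dotProduct_neg]

/-- kernel condition transfer between `(Sᴴ)^j` and `S^j` -/
lemma kernel_iff {n : ℕ} (L : Matrix (Fin n) (Fin n) ℂ) (j : ℕ) (x : Fin n → ℂ) :
    hermPart L *ᵥ (((skewPart L)ᴴ) ^ j *ᵥ x) = 0 ↔
      hermPart L *ᵥ ((skewPart L) ^ j *ᵥ x) = 0 := by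
  rw [skewPart_conjTranspose]
  rcases Nat.even_or_odd j with hj | hj
  · rw [hj.neg_pow]
  · rw [hj.neg_pow, neg_mulVec, mulVec_neg, neg_eq_zero]

/-- if `L` is semi-dissipative with hypocoercivity index `m ≥ 1`, then there is
a normalized vector `u₀` with `L_H L_S^j u₀ = 0` for `0 ≤ j ≤ m-1` and `L_H L_S^m u₀ ≠ 0`. -/
theorem stmt14 {n : ℕ} (L : Matrix (Fin n) (Fin n) ℂ) (hsd : IsSemiDissipative L)
    (m : ℕ) (hm1 : 1 ≤ m) (hm : IsHCIndex L m) :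
    ∃ u₀ : Fin n → ℂ, (∑ i, ‖u₀ i‖ ^ 2 = (1:ℝ)) ∧
      (∀ j < m, hermPart L *ᵥ ((skewPart L) ^ j *ᵥ u₀) = 0) ∧
      hermPart L *ᵥ ((skewPart L) ^ m *ᵥ u₀) ≠ 0 := by
  -- get a counterexample vector from ¬ PosDef (-(Tmat L (m-1)))
  have hnot := hm.2 (m - 1) (Nat.sub_lt hm1 one_pos)
  have hHerm := negTmat_isHermitian L (m - 1)
  have hx : ∃ x : Fin n → ℂ, x ≠ 0 ∧ ¬ (0 < star x ⬝ᵥ ((-(Tmat L (m-1))) *ᵥ x)) := by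
    by_contra h
    push_neg at h
    exact hnot (PosDef.of_dotProduct_mulVec_pos hHerm fun x hx => (h x hx))
  obtain ⟨x, hx0, hxle⟩ := hx
  -- each summand is nonneg
  have hterm : ∀ j, (0:ℂ) ≤ star (((skewPart L)ᴴ) ^ j *ᵥ x) ⬝ᵥ
      ((-(hermPart L)) *ᵥ (((skewPart L)ᴴ) ^ j *ᵥ x)) := fun j => hsd.dotProduct_mulVec_nonneg _
  -- quadratic form is nonneg, hence zero
  have hsumnn : (0:ℂ) ≤ star x ⬝ᵥ ((-(Tmat L (m-1))) *ᵥ x) := by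
    rw [negTmat_quad]
    exact Finset.sum_nonneg fun j _ => hterm j
  have hsum0 : star x ⬝ᵥ ((-(Tmat L (m-1))) *ᵥ x) = 0 :=
    ((hsumnn.lt_or_eq).resolve_left hxle).symm
  rw [negTmat_quad] at hsum0
  have hall : ∀ j ∈ Finset.range (m - 1 + 1),
      star (((skewPart L)ᴴ) ^ j *ᵥ x) ⬝ᵥ
        ((-(hermPart L)) *ᵥ (((skewPart L)ᴴ) ^ j *ᵥ x)) = 0 :=
    (Finset.sum_eq_zero_iff_of_nonneg (fun j _ => hterm j)).mp hsum0
  have hker : ∀ j < m, hermPart L *ᵥ ((skewPart L) ^ j *ᵥ x) = 0 := by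
    intro j hj
    have hj' : j ∈ Finset.range (m - 1 + 1) := by
      simp [Finset.mem_range]; omega
    have := (hsd.dotProduct_mulVec_zero_iff _).mp (hall j hj')
    rw [neg_mulVec, neg_eq_zero] at this
    exact (kernel_iff L j x).mp this
  -- the m-th term is nonzero
  have hpos := hm.1.dotProduct_mulVec_pos hx0
  have hmne : hermPart L *ᵥ ((skewPart L) ^ m *ᵥ x) ≠ 0 := by
    intro hc
    have hc' := (kernel_iff L m x).mpr hc
    rw [negTmat_quad] at hpos
    have : ∀ j ∈ Finset.range (m + 1),
        star (((skewPart L)ᴴ) ^ j *ᵥ x) ⬝ᵥ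
          ((-(hermPart L)) *ᵥ (((skewPart L)ᴴ) ^ j *ᵥ x)) = 0 := by
      intro j hj
      rcases Nat.lt_or_ge j m with h | h
      · have := hker j h
        have h2 : hermPart L *ᵥ (((skewPart L)ᴴ) ^ j *ᵥ x) = 0 :=
          (kernel_iff L j x).mpr this
        rw [neg_mulVec, h2, neg_zero, dotProduct_zero]
      · have hjm : j = m := by simp [Finset.mem_range] at hj; omega
        subst hjm
        rw [neg_mulVec, hc', neg_zero, dotProduct_zero]
    rw [Finset.sum_eq_zero this] at hpos
    exact lt_irrefl _ hpos
  -- normalize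
  have hsumpos : 0 < ∑ i, ‖x i‖ ^ 2 := by
    obtain ⟨i, hi⟩ := Function.ne_iff.mp hx0
    refine Finset.sum_pos' (fun i _ => by positivity) ⟨i, Finset.mem_univ i, ?_⟩
    simpa using pow_pos (norm_pos_iff.mpr hi) 2
  have hrpos : 0 < Real.sqrt (∑ i, ‖x i‖ ^ 2) := Real.sqrt_pos.mpr hsumpos
  set r : ℝ := Real.sqrt (∑ i, ‖x i‖ ^ 2) with hr
  refine ⟨((r:ℂ)⁻¹) • x, ?_, ?_, ?_⟩
  · have h1 : ∀ i, ‖(((r:ℂ)⁻¹) • x) i‖ ^ 2 = r⁻¹ ^ 2 * ‖x i‖ ^ 2 := by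
      intro i
      rw [Pi.smul_apply, norm_smul, mul_pow]
      congr 1
      rw [norm_inv, Complex.norm_real, Real.norm_eq_abs, abs_of_pos hrpos]
    rw [Finset.sum_congr rfl fun i _ => h1 i, ← Finset.mul_sum, inv_pow, hr,
      Real.sq_sqrt hsumpos.le, inv_mul_cancel₀ hsumpos.ne']
  · intro j hj
    rw [mulVec_smul, mulVec_smul, hker j hj, smul_zero]
  · rw [mulVec_smul, mulVec_smul]
    exact smul_ne_zero (by simp [hrpos.ne']) hmne
end
end

section
/- Let L ∈ ℂ^{n×n} with negative semidefinite Hermitian part L_H, let m ∈ ℕ, and let u₀ ∈ ℂ^n satisfy L_H (L_S)^j u₀ = 0 for all 0 ≤ j ≤ m−1. Then ⟨u₀, (L^{2m+1} + (L*)^{2m+1}) u₀⟩ = 2·(−1)^m · ⟨L_S^m u₀, L_H L_S^m u₀⟩; in particular this quantity equals −2·(−1)^m · ‖(−L_H)^{1/2} L_S^m u₀‖². -/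
open Matrix Polynomial
open scoped Matrix.Norms.L2Operator ComplexOrder

noncomputable section

/-- The square root of a positive semidefinite matrix (removed from Mathlib; old definition). -/
def Matrix.PosSemidef.sqrt {n 𝕜 : Type*} [Fintype n] [RCLike 𝕜] [DecidableEq n]
    {A : Matrix n n 𝕜} (hA : A.PosSemidef) : Matrix n n 𝕜 :=
  (hA.1.eigenvectorUnitary : Matrix n n 𝕜) * diagonal ((↑) ∘ (√·) ∘ hA.1.eigenvalues) *
    (star hA.1.eigenvectorUnitary : Matrix n n 𝕜)

lemma Matrix.PosSemidef.posSemidef_sqrt {n 𝕜 : Type*} [Fintype n] [RCLike 𝕜] [DecidableEq n]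
    {A : Matrix n n 𝕜} (hA : A.PosSemidef) : hA.sqrt.PosSemidef := by
  have hD : (diagonal ((↑) ∘ (√·) ∘ hA.1.eigenvalues : n → 𝕜)).PosSemidef := by
    rw [posSemidef_diagonal_iff]
    intro i
    simp [Real.sqrt_nonneg]
  have := hD.mul_mul_conjTranspose_same (hA.1.eigenvectorUnitary : Matrix n n 𝕜)
  rwa [← star_eq_conjTranspose] at this

lemma Matrix.PosSemidef.sqrt_mul_self {n 𝕜 : Type*} [Fintype n] [RCLike 𝕜] [DecidableEq n]
    {A : Matrix n n 𝕜} (hA : A.PosSemidef) : hA.sqrt * hA.sqrt = A := by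
  conv_rhs => rw [hA.1.spectral_theorem]
  rw [Unitary.conjStarAlgAut_apply, Matrix.PosSemidef.sqrt]
  have hU : (star hA.1.eigenvectorUnitary : Matrix n n 𝕜) * (hA.1.eigenvectorUnitary : Matrix n n 𝕜) = 1 :=
    Unitary.coe_star_mul_self _
  have hDD : diagonal ((↑) ∘ (√·) ∘ hA.1.eigenvalues : n → 𝕜) * diagonal ((↑) ∘ (√·) ∘ hA.1.eigenvalues)
      = diagonal (RCLike.ofReal ∘ hA.1.eigenvalues) := by
    rw [diagonal_mul_diagonal]
    congr 1; funext i
    simp only [Function.comp_apply]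
    rw [← RCLike.ofReal_mul, Real.mul_self_sqrt (hA.eigenvalues_nonneg i)]
  calc _ = (hA.1.eigenvectorUnitary : Matrix n n 𝕜) * diagonal ((↑) ∘ (√·) ∘ hA.1.eigenvalues) *
      ((star hA.1.eigenvectorUnitary : Matrix n n 𝕜) * (hA.1.eigenvectorUnitary : Matrix n n 𝕜)) *
      diagonal ((↑) ∘ (√·) ∘ hA.1.eigenvalues) * (star hA.1.eigenvectorUnitary : Matrix n n 𝕜) := by
        simp only [Matrix.mul_assoc]
    _ = _ := by rw [hU, Matrix.mul_one, Matrix.mul_assoc _ (diagonal _) (diagonal _), hDD]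

lemma aux_dot_adj {n : ℕ} (A : Matrix (Fin n) (Fin n) ℂ) (u x : Fin n → ℂ) :
    star u ⬝ᵥ (A *ᵥ x) = star (Aᴴ *ᵥ u) ⬝ᵥ x := by
  rw [Matrix.star_mulVec, Matrix.conjTranspose_conjTranspose, ← Matrix.dotProduct_mulVec]

lemma aux_norm {n : ℕ} (w : Fin n → ℂ) : star w ⬝ᵥ w = ((∑ i, ‖w i‖^2 : ℝ) : ℂ) := by
  push_cast
  simp only [dotProduct, Pi.star_apply, Complex.star_def, RCLike.conj_mul]
  norm_num

/-- odd-power identity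
`⟨u₀, (L^{2m+1} + (L*)^{2m+1}) u₀⟩ = 2 (-1)^m ⟨L_S^m u₀, L_H L_S^m u₀⟩
  = -2 (-1)^m ‖(-L_H)^{1/2} L_S^m u₀‖²`. -/
theorem stmt15 {n : ℕ} (L : Matrix (Fin n) (Fin n) ℂ) (hL : (-(hermPart L)).PosSemidef)
    (m : ℕ) (hm : 1 ≤ m) (u₀ : Fin n → ℂ)
    (h : ∀ j < m, hermPart L *ᵥ ((skewPart L) ^ j *ᵥ u₀) = 0) :
    star u₀ ⬝ᵥ ((L ^ (2 * m + 1) + (Lᴴ) ^ (2 * m + 1)) *ᵥ u₀) =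
        2 * (-1 : ℂ) ^ m *
          (star ((skewPart L) ^ m *ᵥ u₀) ⬝ᵥ (hermPart L *ᵥ ((skewPart L) ^ m *ᵥ u₀))) ∧
      star u₀ ⬝ᵥ ((L ^ (2 * m + 1) + (Lᴴ) ^ (2 * m + 1)) *ᵥ u₀) =
        -2 * (-1 : ℂ) ^ m *
          ((∑ i, ‖(hL.sqrt *ᵥ ((skewPart L) ^ m *ᵥ u₀)) i‖ ^ 2 : ℝ) : ℂ) := by
  set H := hermPart L with hHdef
  set S := skewPart L with hSdef
  have hLHS : L = H + S := by
    ext i j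
    simp [hHdef, hSdef, hermPart, skewPart, Matrix.add_apply, Matrix.smul_apply,
      Matrix.sub_apply]
    ring
  have hLadj : Lᴴ = H - S := by
    have hHh : Hᴴ = H := by
      simp [hHdef, hermPart, Matrix.conjTranspose_smul, Matrix.conjTranspose_add, add_comm]
    have hSh : Sᴴ = -S := by
      ext i j
      simp [hSdef, skewPart, Matrix.conjTranspose_apply, Matrix.smul_apply, Matrix.sub_apply,
        Matrix.neg_apply, map_sub]
      ring
    calc Lᴴ = (H + S)ᴴ := by rw [← hLHS]
    _ = H - S := by rw [Matrix.conjTranspose_add, hHh, hSh, sub_eq_add_neg]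
  have key : ∀ k ≤ m, L ^ k *ᵥ u₀ = S ^ k *ᵥ u₀ ∧
      (Lᴴ) ^ k *ᵥ u₀ = (-1 : ℂ) ^ k • (S ^ k *ᵥ u₀) := by
    intro k
    induction k with
    | zero => intro _; simp
    | succ k ih =>
      intro hk1
      have hk : k < m := Nat.lt_of_succ_le hk1
      obtain ⟨ih1, ih2⟩ := ih hk.le
      have hz := h k hk
      constructor
      · rw [pow_succ', ← Matrix.mulVec_mulVec, ih1, hLHS, Matrix.add_mulVec, hz,
          Matrix.mulVec_mulVec, ← pow_succ']
        simp
      · rw [pow_succ', ← Matrix.mulVec_mulVec, ih2, Matrix.mulVec_smul, hLadj,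
          Matrix.sub_mulVec, hz, Matrix.mulVec_mulVec, ← pow_succ', zero_sub]
        module
  obtain ⟨k1, k2⟩ := key m le_rfl
  set v : Fin n → ℂ := S ^ m *ᵥ u₀ with hv
  have e1 : star u₀ ⬝ᵥ (L ^ (2 * m + 1) *ᵥ u₀)
      = (-1 : ℂ) ^ m * (star v ⬝ᵥ (H *ᵥ v) + star v ⬝ᵥ (S *ᵥ v)) := by
    have hsplit : L ^ (2 * m + 1) = L ^ m * L ^ (m + 1) := by
      rw [← pow_add]; ring_nf
    rw [hsplit, ← Matrix.mulVec_mulVec, aux_dot_adj, Matrix.conjTranspose_pow, k2,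
      pow_succ', ← Matrix.mulVec_mulVec, k1]
    rw [star_smul, smul_dotProduct, hLHS, Matrix.add_mulVec, dotProduct_add]
    simp [smul_eq_mul]
  have e2 : star u₀ ⬝ᵥ ((Lᴴ) ^ (2 * m + 1) *ᵥ u₀)
      = (-1 : ℂ) ^ m * (star v ⬝ᵥ (H *ᵥ v) - star v ⬝ᵥ (S *ᵥ v)) := by
    have hsplit : (Lᴴ) ^ (2 * m + 1) = (Lᴴ) ^ m * (Lᴴ) ^ (m + 1) := by
      rw [← pow_add]; ring_nf
    rw [hsplit, ← Matrix.mulVec_mulVec, aux_dot_adj, Matrix.conjTranspose_pow,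
      Matrix.conjTranspose_conjTranspose, k1, pow_succ', ← Matrix.mulVec_mulVec, k2,
      Matrix.mulVec_smul, dotProduct_smul, hLadj, Matrix.sub_mulVec,
      dotProduct_sub]
    simp [smul_eq_mul]
  have main : star u₀ ⬝ᵥ ((L ^ (2 * m + 1) + (Lᴴ) ^ (2 * m + 1)) *ᵥ u₀)
      = 2 * (-1 : ℂ) ^ m * (star v ⬝ᵥ (H *ᵥ v)) := by
    rw [Matrix.add_mulVec, dotProduct_add, e1, e2]; ring
  refine ⟨main, ?_⟩
  rw [main]
  have hsq : hL.sqrt * hL.sqrt = -H := hL.sqrt_mul_self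
  have hherm : (hL.sqrt)ᴴ = hL.sqrt := hL.posSemidef_sqrt.isHermitian
  have key2 : star v ⬝ᵥ ((-H) *ᵥ v) = star (hL.sqrt *ᵥ v) ⬝ᵥ (hL.sqrt *ᵥ v) := by
    have h2 := aux_dot_adj hL.sqrt v (hL.sqrt *ᵥ v)
    rw [hherm, Matrix.mulVec_mulVec, hsq] at h2
    exact h2
  rw [show ((∑ i, ‖(hL.sqrt *ᵥ v) i‖ ^ 2 : ℝ) : ℂ) = star (hL.sqrt *ᵥ v) ⬝ᵥ (hL.sqrt *ᵥ v)
      from (aux_norm _).symm,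
    ← key2, Matrix.neg_mulVec, dotProduct_neg]
  ring
end
end

section
/- Let L ∈ ℂ^{n×n} with negative semidefinite Hermitian part L_H, let m ∈ ℕ, and let u₀ ∈ ℂ^n satisfy L_H (L_S)^j u₀ = 0 for all 0 ≤ j ≤ m−1. Then ⟨u₀, (L^{2m} + (L*)^{2m}) u₀⟩ = 2·(−1)^m · ‖L_S^m u₀‖². -/
open Matrix Polynomial
open scoped Matrix.Norms.L2Operator ComplexOrder

noncomputable section

/-- even-power identity
`⟨u₀, (L^{2m} + (L*)^{2m}) u₀⟩ = 2 (-1)^m ‖L_S^m u₀‖²`. -/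
theorem stmt16 {n : ℕ} (L : Matrix (Fin n) (Fin n) ℂ) (hL : (-(hermPart L)).PosSemidef)
    (m : ℕ) (hm : 1 ≤ m) (u₀ : Fin n → ℂ)
    (h : ∀ j < m, hermPart L *ᵥ ((skewPart L) ^ j *ᵥ u₀) = 0) :
    star u₀ ⬝ᵥ ((L ^ (2 * m) + (Lᴴ) ^ (2 * m)) *ᵥ u₀) =
      2 * (-1 : ℂ) ^ m * ((∑ i, ‖((skewPart L) ^ m *ᵥ u₀) i‖ ^ 2 : ℝ) : ℂ) := by
  set H := hermPart L with hH
  set S := skewPart L with hS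
  have hLS : L = H + S := by
    simp only [hH, hS, hermPart, skewPart]
    module
  have hLH : Lᴴ = H - S := by
    simp only [hH, hS, hermPart, skewPart]
    module
  have key1 : ∀ k, k ≤ m → L ^ k *ᵥ u₀ = S ^ k *ᵥ u₀ := by
    intro k hk
    induction k with
    | zero => simp
    | succ k ih =>
      rw [pow_succ', ← Matrix.mulVec_mulVec, ih (by omega), hLS,
        Matrix.add_mulVec, h k (by omega), zero_add, Matrix.mulVec_mulVec, ← pow_succ']
  have key2 : ∀ k, k ≤ m → (Lᴴ) ^ k *ᵥ u₀ = (-1 : ℂ) ^ k • (S ^ k *ᵥ u₀) := by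
    intro k hk
    induction k with
    | zero => simp
    | succ k ih =>
      rw [pow_succ', ← Matrix.mulVec_mulVec, ih (by omega), Matrix.mulVec_smul, hLH,
        Matrix.sub_mulVec, h k (by omega), zero_sub, Matrix.mulVec_mulVec, ← pow_succ',
        smul_neg, ← neg_smul]
      congr 1
      ring
  set v := S ^ m *ᵥ u₀ with hv
  have hvv : star v ⬝ᵥ v = ((∑ i, ‖v i‖ ^ 2 : ℝ) : ℂ) := by
    push_cast
    simp only [dotProduct, Pi.star_apply, Complex.star_def]
    refine Finset.sum_congr rfl fun i _ => ?_
    rw [mul_comm, Complex.mul_conj, Complex.normSq_eq_norm_sq]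
    norm_num
  have t1 : star u₀ ⬝ᵥ (L ^ (2 * m) *ᵥ u₀) = (-1 : ℂ) ^ m * (star v ⬝ᵥ v) := by
    rw [two_mul, pow_add, ← Matrix.mulVec_mulVec, key1 m le_rfl, Matrix.dotProduct_mulVec]
    have : star u₀ ᵥ* L ^ m = star ((Lᴴ) ^ m *ᵥ u₀) := by
      rw [Matrix.star_mulVec, ← Matrix.conjTranspose_pow, Matrix.conjTranspose_conjTranspose]
    rw [this, key2 m le_rfl, star_smul, smul_dotProduct]
    simp [← hv]
  have t2 : star u₀ ⬝ᵥ ((Lᴴ) ^ (2 * m) *ᵥ u₀) = (-1 : ℂ) ^ m * (star v ⬝ᵥ v) := by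
    rw [two_mul, pow_add, ← Matrix.mulVec_mulVec, key2 m le_rfl, Matrix.mulVec_smul,
      dotProduct_smul, Matrix.dotProduct_mulVec]
    have : star u₀ ᵥ* (Lᴴ) ^ m = star (L ^ m *ᵥ u₀) := by
      rw [Matrix.star_mulVec, ← Matrix.conjTranspose_pow]
    rw [this, key1 m le_rfl]
    simp [← hv, smul_eq_mul]
  rw [Matrix.add_mulVec, dotProduct_add, t1, t2, ← hvv]
  ring
end
end

section
/- Let R be a stability function of order p ∈ ℕ with s stages and coefficients c_j, and let L ∈ ℂ^{n×n}. Define G(τ) := R(τL)* R(τL) and Q(τ) := e^{τL*} e^{τL}. Then there exists a constant C > 0 such that ‖ G(τ) − Q(τ) − (c_{p+1} − 1)·(τ^{p+1}/(p+1)!)·(L^{p+1} + (L*)^{p+1}) ‖₂ ≤ C·τ^{p+2} for all τ ∈ [0, 1]. -/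
open Matrix Polynomial
open scoped Matrix.Norms.L2Operator ComplexOrder

noncomputable section

variable {n : ℕ}

lemma aux_exp_tail_bound (M : Matrix (Fin n) (Fin n) ℂ) (k : ℕ) (hk : 0 < k) :
    ‖NormedSpace.exp M - ∑ j ∈ Finset.range k, (j.factorial : ℂ)⁻¹ • M ^ j‖ ≤
      ‖M‖ ^ k * Real.exp ‖M‖ := by
  have hsum : Summable (fun j : ℕ => (j.factorial : ℂ)⁻¹ • M ^ j) :=
    NormedSpace.expSeries_summable' M
  have hexp : NormedSpace.exp M = ∑' j : ℕ, (j.factorial : ℂ)⁻¹ • M ^ j :=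
    congrFun (NormedSpace.exp_eq_tsum ℂ) M
  have hsplit := Summable.sum_add_tsum_nat_add k hsum
  have heq : NormedSpace.exp M - ∑ j ∈ Finset.range k, (j.factorial : ℂ)⁻¹ • M ^ j
      = ∑' j : ℕ, ((j + k).factorial : ℂ)⁻¹ • M ^ (j + k) := by
    rw [hexp, ← hsplit]; abel
  rw [heq]
  have hb : ∀ j : ℕ, ‖((j + k).factorial : ℂ)⁻¹ • M ^ (j + k)‖ ≤ ‖M‖ ^ k * (‖M‖ ^ j / j.factorial) := by
    intro j
    rw [norm_smul]
    have h1 : ‖M ^ (j + k)‖ ≤ ‖M‖ ^ (j + k) := norm_pow_le' M (by omega)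
    have h2 : ‖(((j + k).factorial : ℂ))⁻¹‖ = ((j + k).factorial : ℝ)⁻¹ := by
      rw [norm_inv]; norm_num
    rw [h2]
    have h3 : ((j + k).factorial : ℝ)⁻¹ ≤ (j.factorial : ℝ)⁻¹ := by
      apply inv_anti₀
      · positivity
      · exact_mod_cast Nat.factorial_le (by omega)
    calc ((j + k).factorial : ℝ)⁻¹ * ‖M ^ (j + k)‖
        ≤ (j.factorial : ℝ)⁻¹ * ‖M‖ ^ (j + k) := by
          apply mul_le_mul h3 h1 (norm_nonneg _) (by positivity)
      _ = ‖M‖ ^ k * (‖M‖ ^ j / j.factorial) := by rw [pow_add]; ring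
  have hsum2 : Summable (fun j : ℕ => ‖M‖ ^ k * (‖M‖ ^ j / j.factorial)) :=
    (Real.summable_pow_div_factorial ‖M‖).mul_left _
  calc ‖∑' j : ℕ, ((j + k).factorial : ℂ)⁻¹ • M ^ (j + k)‖
      ≤ ∑' j : ℕ, (‖M‖ ^ k * (‖M‖ ^ j / j.factorial)) := by
        apply tsum_of_norm_bounded hsum2.hasSum hb
    _ = ‖M‖ ^ k * ∑' j : ℕ, ‖M‖ ^ j / j.factorial := tsum_mul_left
    _ = ‖M‖ ^ k * Real.exp ‖M‖ := by
        rw [Real.exp_eq_exp_ℝ, NormedSpace.exp_eq_tsum_div]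


lemma aux_exp_conjT (M : Matrix (Fin n) (Fin n) ℂ) :
    NormedSpace.exp Mᴴ = (NormedSpace.exp M)ᴴ := by
  rw [congrFun (NormedSpace.exp_eq_tsum ℂ) M, congrFun (NormedSpace.exp_eq_tsum ℂ) Mᴴ]
  simp only [← Matrix.star_eq_conjTranspose]
  rw [tsum_star]
  congr 1; ext j
  rw [star_smul, star_pow]
  norm_num

lemma aux_norm_sum_smul_pow_le (M : Matrix (Fin n) (Fin n) ℂ) (γ : ℕ → ℂ) (m N : ℕ)
    (hm : 1 ≤ m) (τ b : ℝ) (hτ0 : 0 ≤ τ) (hτ1 : τ ≤ 1) (hMn : ‖M‖ ≤ τ * b) (hb : 0 ≤ b) :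
    ‖∑ j ∈ Finset.Ico m N, γ j • M ^ j‖ ≤ (∑ j ∈ Finset.Ico m N, ‖γ j‖ * b ^ j) * τ ^ m := by
  calc ‖∑ j ∈ Finset.Ico m N, γ j • M ^ j‖ ≤ ∑ j ∈ Finset.Ico m N, ‖γ j • M ^ j‖ :=
        norm_sum_le _ _
    _ ≤ ∑ j ∈ Finset.Ico m N, (‖γ j‖ * b ^ j) * τ ^ m := by
        apply Finset.sum_le_sum
        intro j hj
        obtain ⟨hj1, _⟩ := Finset.mem_Ico.mp hj
        rw [norm_smul]
        have h1 : ‖M ^ j‖ ≤ (τ * b) ^ j := by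
          calc ‖M ^ j‖ ≤ ‖M‖ ^ j := norm_pow_le' M (by omega)
            _ ≤ (τ * b) ^ j := pow_le_pow_left₀ (norm_nonneg _) hMn j
        have h2 : τ ^ j ≤ τ ^ m := pow_le_pow_of_le_one hτ0 hτ1 (by omega)
        calc ‖γ j‖ * ‖M ^ j‖ ≤ ‖γ j‖ * (τ * b) ^ j := by
              exact mul_le_mul_of_nonneg_left h1 (norm_nonneg _)
          _ = (‖γ j‖ * b ^ j) * τ ^ j := by rw [mul_pow]; ring
          _ ≤ (‖γ j‖ * b ^ j) * τ ^ m := by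
              apply mul_le_mul_of_nonneg_left h2 (by positivity)
    _ = (∑ j ∈ Finset.Ico m N, ‖γ j‖ * b ^ j) * τ ^ m := by rw [Finset.sum_mul]

lemma aux_key_id {R : Type*} [Ring R] (A A' E E' β β' : R) :
    A' * A - E' * E - (β + β') =
      ((A - E) - β) + ((A' - E') - β') + (A' - E') * (A - 1) + (E' - 1) * (A - E) := by
  noncomm_ring


set_option maxHeartbeats 2000000 in
/-- expansion of `G(τ) - Q(τ)`, where `G(τ) = R(τL)* R(τL)` and
`Q(τ) = e^{τL*} e^{τL}`:
`G(τ) - Q(τ) = (c_{p+1} - 1) τ^{p+1}/(p+1)! (L^{p+1} + (L*)^{p+1}) + O(τ^{p+2})`. -/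
theorem stmt19 (c : ℕ → ℝ) (p s : ℕ) (h : IsStabilityFunction c p s)
    {n : ℕ} (L : Matrix (Fin n) (Fin n) ℂ) :
    ∃ C > (0:ℝ), ∀ τ : ℝ, 0 ≤ τ → τ ≤ 1 →
      ‖(stabFunMat c s ((τ:ℂ) • L))ᴴ * stabFunMat c s ((τ:ℂ) • L) -
          NormedSpace.exp ((τ:ℂ) • Lᴴ) * NormedSpace.exp ((τ:ℂ) • L) -
          (((c (p + 1) - 1 : ℝ) : ℂ) * ((τ:ℂ) ^ (p + 1) / ((p + 1).factorial : ℂ))) •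
            (L ^ (p + 1) + (Lᴴ) ^ (p + 1))‖ ≤ C * τ ^ (p + 2) := by
  set a : ℝ := ‖L‖ with ha
  have ha0 : 0 ≤ a := norm_nonneg L
  set N : ℕ := s + p + 2 with hN
  set γ : ℕ → ℂ := fun j => ((c j : ℂ) - 1) / (j.factorial : ℂ) with hγ
  set δ : ℕ → ℂ := fun j => (c j : ℂ) / (j.factorial : ℂ) with hδ
  set K₁ : ℝ := (∑ j ∈ Finset.Ico (p+2) N, ‖γ j‖ * a ^ j) + a ^ N * Real.exp a with hK₁
  set K₂ : ℝ := (∑ j ∈ Finset.Ico (p+1) N, ‖γ j‖ * a ^ j) + a ^ N * Real.exp a with hK₂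
  set K₃ : ℝ := ∑ j ∈ Finset.Ico 1 (s+1), ‖δ j‖ * a ^ j with hK₃
  have hK₁0 : 0 ≤ K₁ := by
    apply add_nonneg
    · exact Finset.sum_nonneg fun j _ => by positivity
    · positivity
  have hK₂0 : 0 ≤ K₂ := by
    apply add_nonneg
    · exact Finset.sum_nonneg fun j _ => by positivity
    · positivity
  have hK₃0 : 0 ≤ K₃ := Finset.sum_nonneg fun j _ => by positivity
  refine ⟨2 * K₁ + K₂ * K₃ + (a * Real.exp a) * K₂ + 1, by positivity, ?_⟩
  intro τ hτ0 hτ1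
  set M : Matrix (Fin n) (Fin n) ℂ := (τ:ℂ) • L with hMdef
  have hM : ‖M‖ = τ * a := by
    rw [hMdef, norm_smul, Complex.norm_real, Real.norm_eq_abs, abs_of_nonneg hτ0]
  set A : Matrix (Fin n) (Fin n) ℂ := stabFunMat c s M with hAdef
  set E : Matrix (Fin n) (Fin n) ℂ := NormedSpace.exp M with hEdef
  set αC : ℂ := ((c (p + 1) - 1 : ℝ) : ℂ) * ((τ:ℂ) ^ (p + 1) / ((p + 1).factorial : ℂ)) with hαC
  -- the exp of the conjugate transpose
  have hexpconj : NormedSpace.exp ((τ:ℂ) • Lᴴ) = Eᴴ := by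
    have h1 : (τ:ℂ) • Lᴴ = Mᴴ := by
      rw [hMdef, conjTranspose_smul]
      congr 1
      simp [Complex.star_def, Complex.conj_ofReal]
    rw [h1, hEdef, aux_exp_conjT]
  -- extension of the stability sum to range N
  have hA : A = ∑ j ∈ Finset.range N, δ j • M ^ j := by
    rw [hAdef, stabFunMat]
    apply Finset.sum_subset (Finset.range_subset_range.2 (by omega))
    intro j hj hnot
    have hsj : s < j := by
      simp only [Finset.mem_range] at hj hnot; omega
    simp [hδ, h.high j hsj]
  -- the exponential tail
  set T : Matrix (Fin n) (Fin n) ℂ :=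
    E - ∑ j ∈ Finset.range N, (j.factorial : ℂ)⁻¹ • M ^ j with hTdef
  have hT : ‖T‖ ≤ τ ^ (p+2) * (a ^ N * Real.exp a) := by
    have h1 : ‖T‖ ≤ ‖M‖ ^ N * Real.exp ‖M‖ := aux_exp_tail_bound M N (by omega)
    rw [hM] at h1
    have h2 : (τ * a) ^ N = τ ^ N * a ^ N := mul_pow τ a N
    have h3 : τ ^ N ≤ τ ^ (p+2) := pow_le_pow_of_le_one hτ0 hτ1 (by omega)
    have h4 : Real.exp (τ * a) ≤ Real.exp a :=
      Real.exp_le_exp.2 (by nlinarith)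
    calc ‖T‖ ≤ (τ * a) ^ N * Real.exp (τ * a) := h1
      _ = (τ ^ N * a ^ N) * Real.exp (τ * a) := by rw [h2]
      _ ≤ (τ ^ (p+2) * a ^ N) * Real.exp a := by
          apply mul_le_mul _ h4 (Real.exp_nonneg _) (by positivity)
          exact mul_le_mul_of_nonneg_right h3 (by positivity)
      _ = τ ^ (p+2) * (a ^ N * Real.exp a) := by ring
  -- decomposition of D := A - E
  have hD : A - E = (∑ j ∈ Finset.Ico (p+1) N, γ j • M ^ j) - T := by
    have hsum_eq : (∑ j ∈ Finset.range N, γ j • M ^ j)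
        = (∑ j ∈ Finset.range N, δ j • M ^ j) - ∑ j ∈ Finset.range N, (j.factorial : ℂ)⁻¹ • M ^ j := by
      rw [← Finset.sum_sub_distrib]
      apply Finset.sum_congr rfl
      intro j _
      rw [← sub_smul]
      congr 1
      rw [hδ, hγ]
      have : ((j.factorial : ℂ)) ≠ 0 := by
        exact_mod_cast Nat.factorial_ne_zero j
      field_simp
    have h1 : A - E = (∑ j ∈ Finset.range N, γ j • M ^ j) - T := by
      rw [hA, hTdef, hsum_eq]
      abel
    rw [h1]
    congr 1
    rw [Finset.range_eq_Ico, ← Finset.sum_Ico_consecutive _ (Nat.zero_le (p+1)) (by omega)]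
    have hz : ∑ j ∈ Finset.Ico 0 (p+1), γ j • M ^ j = 0 := by
      apply Finset.sum_eq_zero
      intro j hj
      have hjp : j ≤ p := by simp only [Finset.mem_Ico] at hj; omega
      rw [hγ]
      simp [h.low j hjp]
    rw [hz, zero_add]
  -- split off the leading term
  have hsplit : ∑ j ∈ Finset.Ico (p+1) N, γ j • M ^ j
      = αC • L ^ (p+1) + ∑ j ∈ Finset.Ico (p+2) N, γ j • M ^ j := by
    rw [Finset.sum_eq_sum_Ico_succ_bot (show p+1 < N by omega)]
    congr 1
    rw [hγ, hMdef, _root_.smul_pow, smul_smul, hαC]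
    congr 1
    push_cast
    ring
  -- norm bounds
  have hMle : ‖M‖ ≤ τ * a := le_of_eq hM
  have hX : ‖(A - E) - αC • L ^ (p+1)‖ ≤ K₁ * τ ^ (p+2) := by
    have heq : (A - E) - αC • L ^ (p+1) = (∑ j ∈ Finset.Ico (p+2) N, γ j • M ^ j) - T := by
      rw [hD, hsplit]; abel
    rw [heq]
    have h1 := aux_norm_sum_smul_pow_le M γ (p+2) N (by omega) τ a hτ0 hτ1 hMle ha0
    calc ‖(∑ j ∈ Finset.Ico (p+2) N, γ j • M ^ j) - T‖
        ≤ ‖∑ j ∈ Finset.Ico (p+2) N, γ j • M ^ j‖ + ‖T‖ := norm_sub_le _ _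
      _ ≤ (∑ j ∈ Finset.Ico (p+2) N, ‖γ j‖ * a ^ j) * τ ^ (p+2)
            + τ ^ (p+2) * (a ^ N * Real.exp a) := add_le_add h1 hT
      _ = K₁ * τ ^ (p+2) := by rw [hK₁]; ring
  have hDn : ‖A - E‖ ≤ K₂ * τ ^ (p+1) := by
    rw [hD]
    have h1 := aux_norm_sum_smul_pow_le M γ (p+1) N (by omega) τ a hτ0 hτ1 hMle ha0
    have hT' : ‖T‖ ≤ τ ^ (p+1) * (a ^ N * Real.exp a) := by
      refine hT.trans ?_
      apply mul_le_mul_of_nonneg_right (pow_le_pow_of_le_one hτ0 hτ1 (by omega)) (by positivity)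
    calc ‖(∑ j ∈ Finset.Ico (p+1) N, γ j • M ^ j) - T‖
        ≤ ‖∑ j ∈ Finset.Ico (p+1) N, γ j • M ^ j‖ + ‖T‖ := norm_sub_le _ _
      _ ≤ (∑ j ∈ Finset.Ico (p+1) N, ‖γ j‖ * a ^ j) * τ ^ (p+1)
            + τ ^ (p+1) * (a ^ N * Real.exp a) := add_le_add h1 hT'
      _ = K₂ * τ ^ (p+1) := by rw [hK₂]; ring
  have hA1 : ‖A - 1‖ ≤ K₃ * τ := by
    have heq : A - 1 = ∑ j ∈ Finset.Ico 1 (s+1), δ j • M ^ j := by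
      rw [hAdef, stabFunMat, Finset.range_eq_Ico,
        Finset.sum_eq_sum_Ico_succ_bot (show 0 < s+1 by omega)]
      have hc0 : c 0 = 1 := h.low 0 (Nat.zero_le p)
      simp [hc0, hδ]
    rw [heq]
    have h1 := aux_norm_sum_smul_pow_le M δ 1 (s+1) le_rfl τ a hτ0 hτ1 hMle ha0
    calc ‖∑ j ∈ Finset.Ico 1 (s+1), δ j • M ^ j‖
        ≤ (∑ j ∈ Finset.Ico 1 (s+1), ‖δ j‖ * a ^ j) * τ ^ 1 := h1
      _ = K₃ * τ := by rw [hK₃, pow_one]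
  have hE1 : ‖E - 1‖ ≤ (a * Real.exp a) * τ := by
    have h1 : ‖E - ∑ j ∈ Finset.range 1, (j.factorial : ℂ)⁻¹ • M ^ j‖
        ≤ ‖M‖ ^ 1 * Real.exp ‖M‖ := aux_exp_tail_bound M 1 one_pos
    have h2 : ∑ j ∈ Finset.range 1, (j.factorial : ℂ)⁻¹ • M ^ j = 1 := by
      rw [Finset.sum_range_one, pow_zero]
      norm_num
    rw [h2, pow_one, hM] at h1
    have h4 : Real.exp (τ * a) ≤ Real.exp a := Real.exp_le_exp.2 (by nlinarith)
    calc ‖E - 1‖ ≤ (τ * a) * Real.exp (τ * a) := h1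
      _ ≤ (τ * a) * Real.exp a := by
          apply mul_le_mul_of_nonneg_left h4 (by positivity)
      _ = (a * Real.exp a) * τ := by ring
  -- star of the scalar
  have hstar : star αC = αC := by
    rw [hαC]
    simp [Complex.star_def, _root_.map_mul, map_div₀, Complex.conj_ofReal, _root_.map_pow]
  -- conjugate transpose of the leading term
  have hβ : (αC • L ^ (p+1))ᴴ = αC • (Lᴴ) ^ (p+1) := by
    rw [conjTranspose_smul, hstar, conjTranspose_pow]
  -- assemble
  rw [hexpconj]
  have hid : Aᴴ * A - Eᴴ * E - αC • (L ^ (p + 1) + (Lᴴ) ^ (p + 1))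
      = ((A - E) - αC • L ^ (p+1)) + (((A - E) - αC • L ^ (p+1))ᴴ)
        + (Aᴴ - Eᴴ) * (A - 1) + (Eᴴ - 1) * (A - E) := by
    rw [smul_add]
    rw [conjTranspose_sub, conjTranspose_sub, hβ]
    exact aux_key_id A Aᴴ E Eᴴ (αC • L ^ (p+1)) (αC • (Lᴴ) ^ (p+1))
  rw [hid]
  have hXc : ‖((A - E) - αC • L ^ (p+1))ᴴ‖ = ‖(A - E) - αC • L ^ (p+1)‖ :=
    Matrix.l2_opNorm_conjTranspose _
  have hDc : ‖Aᴴ - Eᴴ‖ = ‖A - E‖ := by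
    rw [← conjTranspose_sub]; exact Matrix.l2_opNorm_conjTranspose _
  have hEc : ‖Eᴴ - 1‖ = ‖E - 1‖ := by
    rw [show (1 : Matrix (Fin n) (Fin n) ℂ) = (1 : Matrix (Fin n) (Fin n) ℂ)ᴴ by simp,
      ← conjTranspose_sub, Matrix.l2_opNorm_conjTranspose]
    simp
  have hτp2 : (0:ℝ) ≤ τ ^ (p+2) := by positivity
  have hmul1 : ‖(Aᴴ - Eᴴ) * (A - 1)‖ ≤ (K₂ * K₃) * τ ^ (p+2) := by
    calc ‖(Aᴴ - Eᴴ) * (A - 1)‖ ≤ ‖Aᴴ - Eᴴ‖ * ‖A - 1‖ := norm_mul_le _ _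
      _ ≤ (K₂ * τ ^ (p+1)) * (K₃ * τ) := by
          rw [hDc]
          apply mul_le_mul hDn hA1 (norm_nonneg _) (by positivity)
      _ = (K₂ * K₃) * τ ^ (p+2) := by ring
  have hmul2 : ‖(Eᴴ - 1) * (A - E)‖ ≤ ((a * Real.exp a) * K₂) * τ ^ (p+2) := by
    calc ‖(Eᴴ - 1) * (A - E)‖ ≤ ‖Eᴴ - 1‖ * ‖A - E‖ := norm_mul_le _ _
      _ ≤ ((a * Real.exp a) * τ) * (K₂ * τ ^ (p+1)) := by
          rw [hEc]
          apply mul_le_mul hE1 hDn (norm_nonneg _) (by positivity)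
      _ = ((a * Real.exp a) * K₂) * τ ^ (p+2) := by ring
  calc ‖((A - E) - αC • L ^ (p+1)) + (((A - E) - αC • L ^ (p+1))ᴴ)
        + (Aᴴ - Eᴴ) * (A - 1) + (Eᴴ - 1) * (A - E)‖
      ≤ ‖((A - E) - αC • L ^ (p+1)) + (((A - E) - αC • L ^ (p+1))ᴴ)
        + (Aᴴ - Eᴴ) * (A - 1)‖ + ‖(Eᴴ - 1) * (A - E)‖ := norm_add_le _ _
    _ ≤ (‖((A - E) - αC • L ^ (p+1)) + (((A - E) - αC • L ^ (p+1))ᴴ)‖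
        + ‖(Aᴴ - Eᴴ) * (A - 1)‖) + ‖(Eᴴ - 1) * (A - E)‖ := by
          gcongr; exact norm_add_le _ _
    _ ≤ ((‖(A - E) - αC • L ^ (p+1)‖ + ‖((A - E) - αC • L ^ (p+1))ᴴ‖)
        + ‖(Aᴴ - Eᴴ) * (A - 1)‖) + ‖(Eᴴ - 1) * (A - E)‖ := by
          gcongr; exact norm_add_le _ _
    _ ≤ ((K₁ * τ ^ (p+2) + K₁ * τ ^ (p+2)) + (K₂ * K₃) * τ ^ (p+2))
        + ((a * Real.exp a) * K₂) * τ ^ (p+2) := by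
          apply add_le_add (add_le_add (add_le_add hX (by rw [hXc]; exact hX)) hmul1) hmul2
    _ ≤ (2 * K₁ + K₂ * K₃ + (a * Real.exp a) * K₂ + 1) * τ ^ (p+2) := by nlinarith
end
end
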